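/- arXiv:1207.5259 — 4 statements merged into one kernel-verified Lean document; each statement's English description precedes it below -/
import Mathlib

section
/- Let $\Omega$ be a countable set, $A \subseteq \Omega$, and let $X_1,\dots,X_n$ be i.i.d. random variables with distribution $P$ on $\Omega$. Let $R_n = \sum_{x\in A} P(x)\,\mathbb{1}\{\forall m\le n,\ X_m \neq x\}$ be the missing mass of $A$ and $U_n = \sum_{x\in A}\mathbb{1}\{x \text{ appears exactly once among } X_1,\dots,X_n\}$, with Good-Turing estimator $\hat R_n = U_n/n$. Then $-1/n \le \mathbb{E}[R_n] - \mathbb{E}[\hat R_n] \le 0$. -/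
open scoped Classical ENNReal

open MeasureTheory ProbabilityTheory

theorem GT_miss_meas {Ω : Type*} [MeasurableSpace Ω] [MeasurableSingletonClass Ω]
    (P : Measure Ω) [IsProbabilityMeasure P]
    {Θ : Type*} [MeasurableSpace Θ] (μ : Measure Θ) [IsProbabilityMeasure μ]
    (n : ℕ) (X : Fin n → Θ → Ω) (hmeas : ∀ m, Measurable (X m))
    (hindep : iIndepFun X μ)
    (hlaw : ∀ m, Measure.map (X m) μ = P) (x : Ω) :
    μ {ω | ∀ m : Fin n, X m ω ≠ x} = (1 - P {x}) ^ n := by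
  have hpre : ∀ m, μ (X m ⁻¹' {x}ᶜ) = 1 - P {x} := by
    intro m
    have h1 : P {x}ᶜ = μ (X m ⁻¹' {x}ᶜ) := by
      rw [← hlaw m, Measure.map_apply (hmeas m) (measurableSet_singleton x).compl]
    rw [← h1, measure_compl (measurableSet_singleton x) (measure_ne_top _ _), measure_univ]
  have hset : {ω | ∀ m : Fin n, X m ω ≠ x} = ⋂ m, X m ⁻¹' {x}ᶜ := by
    ext ω; simp [Set.mem_iInter]
  rw [hset, hindep.meas_iInter (fun m => ⟨{x}ᶜ, (measurableSet_singleton x).compl, rfl⟩)]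
  simp [← Set.preimage_compl, hpre, Finset.prod_const]

theorem GT_once_set {Ω Θ : Type*} (n : ℕ) (X : Fin n → Θ → Ω) (x : Ω) :
    {ω | ∃! m : Fin n, X m ω = x} =
      ⋃ m, ⋂ k, X k ⁻¹' (if k = m then {x} else {x}ᶜ) := by
  ext ω
  simp only [Set.mem_setOf_eq, Set.mem_iUnion, Set.mem_iInter, Set.mem_preimage, ExistsUnique]
  constructor
  · rintro ⟨m, hm, huniq⟩
    refine ⟨m, fun k => ?_⟩
    by_cases hk : k = m
    · simp [hk, hm]
    · simp only [if_neg hk, Set.mem_compl_iff, Set.mem_singleton_iff]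
      exact fun h => hk (huniq k h)
  · rintro ⟨m, hm⟩
    refine ⟨m, ?_, fun k hk => ?_⟩
    · have := hm m; simpa using this
    · by_contra hkm
      have := hm k
      simp only [if_neg hkm, Set.mem_compl_iff, Set.mem_singleton_iff] at this
      exact this hk

theorem GT_once_meas {Ω : Type*} [MeasurableSpace Ω] [MeasurableSingletonClass Ω]
    (P : Measure Ω) [IsProbabilityMeasure P]
    {Θ : Type*} [MeasurableSpace Θ] (μ : Measure Θ) [IsProbabilityMeasure μ]
    (n : ℕ) (X : Fin n → Θ → Ω) (hmeas : ∀ m, Measurable (X m))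
    (hindep : iIndepFun X μ)
    (hlaw : ∀ m, Measure.map (X m) μ = P) (x : Ω) :
    μ {ω | ∃! m : Fin n, X m ω = x} = n * P {x} * (1 - P {x}) ^ (n - 1) := by
  have hpre1 : ∀ m, μ (X m ⁻¹' {x}) = P {x} := fun m => by
    rw [← hlaw m, Measure.map_apply (hmeas m) (measurableSet_singleton x)]
  have hprec : ∀ m, μ (X m ⁻¹' {x}ᶜ) = 1 - P {x} := by
    intro m
    have h1 : P {x}ᶜ = μ (X m ⁻¹' {x}ᶜ) := by
      rw [← hlaw m, Measure.map_apply (hmeas m) (measurableSet_singleton x).compl]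
    rw [← h1, measure_compl (measurableSet_singleton x) (measure_ne_top _ _), measure_univ]
  set B : Fin n → Fin n → Set Ω := fun m k => if k = m then {x} else {x}ᶜ with hB
  have hmB : ∀ m k, MeasurableSet (B m k) := fun m k => by
    by_cases h : k = m <;> simp [hB, h, (measurableSet_singleton x).compl]
  have hterm : ∀ m, μ (⋂ k, X k ⁻¹' B m k) = P {x} * (1 - P {x}) ^ (n - 1) := by
    intro m
    rw [hindep.meas_iInter (fun k => ⟨B m k, hmB m k, rfl⟩)]
    rw [← Finset.mul_prod_erase Finset.univ _ (Finset.mem_univ m)]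
    have h1 : X m ⁻¹' B m m = X m ⁻¹' {x} := by simp [hB]
    rw [h1, hpre1]
    congr 1
    rw [Finset.prod_congr rfl (fun k hk => ?_), Finset.prod_const,
      Finset.card_erase_of_mem (Finset.mem_univ m), Finset.card_univ, Fintype.card_fin]
    have hk' : k ≠ m := Finset.ne_of_mem_erase hk
    show μ (X k ⁻¹' B m k) = 1 - P {x}
    rw [show B m k = {x}ᶜ by simp [hB, hk'], hprec]
  have hdisj : Pairwise (Function.onFun Disjoint fun m => ⋂ k, X k ⁻¹' B m k) := by
    intro a b hab
    refine Set.disjoint_left.mpr fun ω ha hb => ?_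
    simp only [Set.mem_iInter, Set.mem_preimage] at ha hb
    have h1 := ha a; have h2 := hb a
    simp only [hB, if_pos rfl, Set.mem_singleton_iff] at h1
    simp only [hB, if_neg hab, Set.mem_compl_iff, Set.mem_singleton_iff] at h2
    exact h2 h1
  have hrw : (⋃ m, ⋂ k, X k ⁻¹' (if k = m then ({x} : Set Ω) else {x}ᶜ)) =
      ⋃ m, ⋂ k, X k ⁻¹' B m k := rfl
  rw [GT_once_set n X x, hrw,
    measure_iUnion hdisj (fun m => MeasurableSet.iInter (fun k => hmeas k (hmB m k)))]
  simp [hterm, tsum_fintype, Finset.sum_const, mul_assoc]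

theorem GT_ncard_eq_tsum {Ω : Type*} (A : Set Ω) (S : Set Ω) (hSA : S ⊆ A) :
    ((S.ncard : ℝ)) = ∑' x : A, (if (x : Ω) ∈ S then (1 : ℝ) else 0) := by
  have e : {x : ↥A // (x : Ω) ∈ S} ≃ ↥S :=
    ⟨fun y => ⟨y.1.1, y.2⟩, fun z => ⟨⟨z.1, hSA z.2⟩, z.2⟩,
      fun y => Subtype.ext (Subtype.ext rfl), fun z => rfl⟩
  calc ((S.ncard : ℝ)) = (Nat.card S : ℝ) := by rw [Nat.card_coe_set_eq]
    _ = (Nat.card {x : ↥A | (x : Ω) ∈ S} : ℝ) := by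
        norm_cast
        exact Nat.card_congr e.symm
    _ = ∑' _ : {x : ↥A | (x : Ω) ∈ S}, (1 : ℝ) := by rw [tsum_const]; simp
    _ = ∑' x : A, Set.indicator {x : ↥A | (x : Ω) ∈ S} (fun _ => (1:ℝ)) x :=
        tsum_subtype {x : ↥A | (x : Ω) ∈ S} (fun _ => (1:ℝ))
    _ = ∑' x : A, (if (x : Ω) ∈ S then (1 : ℝ) else 0) :=
        tsum_congr fun x => by simp [Set.indicator_apply]

/-- Good-Turing bias bound: with `X₁,…,Xₙ` i.i.d. with law `P` on a countable set `Ω`,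
`Rₙ = ∑_{x∈A} P(x) 𝟙{∀m, Xₘ ≠ x}` the missing mass of `A ⊆ Ω`, and
`R̂ₙ = (1/n)·#{x ∈ A seen exactly once}` the Good-Turing estimator, one has
`-1/n ≤ 𝔼[Rₙ] - 𝔼[R̂ₙ] ≤ 0`. -/
theorem stmt_0 {Ω : Type*} [Countable Ω] [MeasurableSpace Ω] [MeasurableSingletonClass Ω]
    (A : Set Ω) (P : Measure Ω) [IsProbabilityMeasure P]
    {Θ : Type*} [MeasurableSpace Θ] (μ : Measure Θ) [IsProbabilityMeasure μ]
    (n : ℕ) (hn : 1 ≤ n) (X : Fin n → Θ → Ω) (hmeas : ∀ m, Measurable (X m))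
    (hindep : iIndepFun X μ)
    (hlaw : ∀ m, Measure.map (X m) μ = P)
    (R Rhat : Θ → ℝ)
    (hR : ∀ ω, R ω =
      ∑' x : A, (P {(x : Ω)}).toReal * (if ∀ m : Fin n, X m ω ≠ x then 1 else 0))
    (hRhat : ∀ ω, Rhat ω = (Set.ncard {a ∈ A | ∃! m : Fin n, X m ω = a}) / n) :
    -(1 / (n : ℝ)) ≤ (∫ ω, R ω ∂μ) - ∫ ω, Rhat ω ∂μ ∧
      (∫ ω, R ω ∂μ) - ∫ ω, Rhat ω ∂μ ≤ 0 := by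
  have hn0 : (0:ℝ) < n := by exact_mod_cast hn
  set p : A → ℝ≥0∞ := fun x => P {(x : Ω)} with hp
  have hp1 : ∀ x, p x ≤ 1 := fun x => prob_le_one
  have hpt : ∀ x : A, p x ≠ ⊤ := fun x => ((hp1 x).trans_lt ENNReal.one_lt_top).ne
  set r : A → ℝ := fun x => (p x).toReal with hrdef
  have hr0 : ∀ x, 0 ≤ r x := fun x => ENNReal.toReal_nonneg
  have hr1 : ∀ x, r x ≤ 1 := fun x => by
    have := ENNReal.toReal_mono (by simp) (hp1 x)
    simpa using this
  have hsumP : ∑' x : A, p x ≤ 1 := by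
    have hdisj : Pairwise (Function.onFun Disjoint fun x : A => ({(x:Ω)} : Set Ω)) := by
      intro i j hij
      simp only [Function.onFun, Set.disjoint_singleton]
      exact fun h => hij (Subtype.ext h)
    calc ∑' x : A, p x = P (⋃ x : A, {(x:Ω)}) :=
          (measure_iUnion hdisj fun x => measurableSet_singleton _).symm
      _ ≤ 1 := prob_le_one
  have hsumr : Summable r :=
    ENNReal.summable_toReal (hsumP.trans_lt ENNReal.one_lt_top).ne
  have hsumr1 : ∑' x : A, r x ≤ 1 := by
    rw [hrdef, ← ENNReal.tsum_toReal_eq hpt]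
    have := ENNReal.toReal_mono (by simp) hsumP
    simpa using this
  -- events
  set N : A → Set Θ := fun x => {ω | ∀ m : Fin n, X m ω ≠ (x:Ω)} with hN
  set E1 : A → Set Θ := fun x => {ω | ∃! m : Fin n, X m ω = (x:Ω)} with hE1
  have hNmeas : ∀ x, MeasurableSet (N x) := by
    intro x
    have h : N x = ⋂ m, X m ⁻¹' {(x:Ω)}ᶜ := by ext ω; simp [hN]
    rw [h]
    exact MeasurableSet.iInter fun m => hmeas m (measurableSet_singleton _).compl
  have hE1meas : ∀ x, MeasurableSet (E1 x) := by
    intro x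
    rw [show E1 x = {ω | ∃! m : Fin n, X m ω = (x:Ω)} from rfl, GT_once_set n X (x:Ω)]
    refine MeasurableSet.iUnion fun m => MeasurableSet.iInter fun k => hmeas k ?_
    by_cases h : k = m <;> simp [h, (measurableSet_singleton _).compl]
  have hNμ : ∀ x, μ (N x) = (1 - p x) ^ n :=
    fun x => GT_miss_meas P μ n X hmeas hindep hlaw (x:Ω)
  have hE1μ : ∀ x, μ (E1 x) = n * p x * (1 - p x) ^ (n - 1) :=
    fun x => GT_once_meas P μ n X hmeas hindep hlaw (x:Ω)
  -- real values
  have hμN : ∀ x, (μ (N x)).toReal = (1 - r x) ^ n := by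
    intro x
    rw [hNμ x, ENNReal.toReal_pow, ENNReal.toReal_sub_of_le (hp1 x) ENNReal.one_ne_top]
    simp [hrdef]
  have hμE : ∀ x, (μ (E1 x)).toReal = n * (r x * (1 - r x) ^ (n - 1)) := by
    intro x
    rw [hE1μ x, ENNReal.toReal_mul, ENNReal.toReal_mul, ENNReal.toReal_pow,
      ENNReal.toReal_sub_of_le (hp1 x) ENNReal.one_ne_top]
    simp [hrdef, mul_assoc]
  have hE1le : ∀ x, (n:ℝ) * (r x * (1 - r x) ^ (n - 1)) ≤ 1 := by
    intro x
    rw [← hμE x]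
    have h := (ENNReal.toReal_le_toReal (measure_ne_top μ _) ENNReal.one_ne_top).mpr
      (prob_le_one (μ := μ) (s := E1 x))
    simpa using h
  -- integral of R
  have hRint : ∫ ω, R ω ∂μ = ∑' x : A, r x * (μ (N x)).toReal := by
    have hfm : ∀ x : A, AEStronglyMeasurable
        (fun ω => r x * (N x).indicator (fun _ => (1:ℝ)) ω) μ := fun x =>
      ((measurable_const.indicator (hNmeas x)).const_mul _).aestronglyMeasurable
    have hbd : ∑' x : A, ∫⁻ ω, ‖r x * (N x).indicator (fun _ => (1:ℝ)) ω‖₊ ∂μ ≠ ⊤ := by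
      refine (lt_of_le_of_lt (le_trans (ENNReal.tsum_le_tsum fun x => ?_) hsumP)
        ENNReal.one_lt_top).ne
      refine le_trans (lintegral_mono (g := fun _ => p x) fun ω => ?_) (by simp)
      show (‖r x * (N x).indicator (fun _ => (1:ℝ)) ω‖₊ : ℝ≥0∞) ≤ p x
      by_cases hω : ω ∈ N x
      · simp only [Set.indicator_of_mem hω, mul_one]
        rw [← enorm_eq_nnnorm, Real.enorm_eq_ofReal (hr0 x)]
        exact ENNReal.ofReal_toReal_le
      · simp [Set.indicator_of_notMem hω]
    calc ∫ ω, R ω ∂μ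
        = ∫ ω, ∑' x : A, r x * (N x).indicator (fun _ => (1:ℝ)) ω ∂μ := by
          refine integral_congr_ae (Filter.Eventually.of_forall fun ω => ?_)
          rw [hR ω]
          refine tsum_congr fun x => ?_
          congr 1
          rcases Classical.em (ω ∈ N x) with hω | hω
          · rw [Set.indicator_of_mem hω, if_pos (show ∀ m : Fin n, X m ω ≠ (x:Ω) from hω)]
          · rw [Set.indicator_of_notMem hω,
              if_neg (show ¬ ∀ m : Fin n, X m ω ≠ (x:Ω) from hω)]
      _ = ∑' x : A, ∫ ω, r x * (N x).indicator (fun _ => (1:ℝ)) ω ∂μ :=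
          integral_tsum hfm hbd
      _ = ∑' x : A, r x * (μ (N x)).toReal := by
          refine tsum_congr fun x => ?_
          rw [integral_const_mul]
          congr 1
          exact integral_indicator_one (hNmeas x)
  -- integral of Rhat
  have hRhat' : ∀ ω, Rhat ω = ∑' x : A, (n:ℝ)⁻¹ * (E1 x).indicator (fun _ => (1:ℝ)) ω := by
    intro ω
    rw [hRhat ω]
    have hSA : {a ∈ A | ∃! m : Fin n, X m ω = a} ⊆ A := Set.sep_subset _ _
    rw [GT_ncard_eq_tsum A _ hSA, div_eq_inv_mul, ← tsum_mul_left]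
    refine tsum_congr fun x => ?_
    congr 1
    by_cases hω : ω ∈ E1 x
    · rw [Set.indicator_of_mem hω, if_pos ⟨x.2, hω⟩]
    · rw [Set.indicator_of_notMem hω, if_neg (fun h => hω h.2)]
  have hRhatint : ∫ ω, Rhat ω ∂μ = ∑' x : A, (n:ℝ)⁻¹ * (μ (E1 x)).toReal := by
    have hfm : ∀ x : A, AEStronglyMeasurable
        (fun ω => (n:ℝ)⁻¹ * (E1 x).indicator (fun _ => (1:ℝ)) ω) μ := fun x =>
      ((measurable_const.indicator (hE1meas x)).const_mul _).aestronglyMeasurable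
    have hbd : ∑' x : A, ∫⁻ ω, ‖(n:ℝ)⁻¹ * (E1 x).indicator (fun _ => (1:ℝ)) ω‖₊ ∂μ ≠ ⊤ := by
      have hstep : ∀ x : A, ∫⁻ ω, ‖(n:ℝ)⁻¹ * (E1 x).indicator (fun _ => (1:ℝ)) ω‖₊ ∂μ
          ≤ (n:ℝ≥0∞) * p x := by
        intro x
        have h1 : ∫⁻ ω, ‖(n:ℝ)⁻¹ * (E1 x).indicator (fun _ => (1:ℝ)) ω‖₊ ∂μ ≤ μ (E1 x) := by
          rw [← lintegral_indicator_one (hE1meas x)]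
          refine lintegral_mono fun ω => ?_
          by_cases hω : ω ∈ E1 x
          · simp only [Set.indicator_of_mem hω, mul_one, Pi.one_apply]
            rw [← enorm_eq_nnnorm, Real.enorm_eq_ofReal (by positivity)]
            refine ENNReal.ofReal_le_one.mpr ?_
            rw [inv_le_one_iff₀]
            right; exact_mod_cast hn
          · simp [Set.indicator_of_notMem hω]
        refine h1.trans ?_
        rw [hE1μ x]
        calc (n:ℝ≥0∞) * p x * (1 - p x) ^ (n-1) ≤ (n:ℝ≥0∞) * p x * 1 := by
              refine mul_le_mul_right (pow_le_one' tsub_le_self _) _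
          _ = (n:ℝ≥0∞) * p x := mul_one _
      refine (lt_of_le_of_lt (le_trans (ENNReal.tsum_le_tsum hstep) ?_)
        (lt_of_le_of_lt le_rfl (ENNReal.natCast_lt_top n))).ne
      rw [ENNReal.tsum_mul_left]
      calc (n:ℝ≥0∞) * ∑' x : A, p x ≤ (n:ℝ≥0∞) * 1 := mul_le_mul_right hsumP _
        _ = (n:ℝ≥0∞) := mul_one _
    calc ∫ ω, Rhat ω ∂μ
        = ∫ ω, ∑' x : A, (n:ℝ)⁻¹ * (E1 x).indicator (fun _ => (1:ℝ)) ω ∂μ := by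
          exact integral_congr_ae (Filter.Eventually.of_forall hRhat')
      _ = ∑' x : A, ∫ ω, (n:ℝ)⁻¹ * (E1 x).indicator (fun _ => (1:ℝ)) ω ∂μ :=
          integral_tsum hfm hbd
      _ = ∑' x : A, (n:ℝ)⁻¹ * (μ (E1 x)).toReal := by
          refine tsum_congr fun x => ?_
          rw [integral_const_mul]
          congr 1
          exact integral_indicator_one (hE1meas x)
  -- final arithmetic
  set a : A → ℝ := fun x => r x * (1 - r x) ^ n with ha
  set b : A → ℝ := fun x => r x * (1 - r x) ^ (n - 1) with hb
  have hint1 : ∫ ω, R ω ∂μ = ∑' x, a x := by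
    rw [hRint]; exact tsum_congr fun x => by rw [hμN x]
  have hint2 : ∫ ω, Rhat ω ∂μ = ∑' x, b x := by
    rw [hRhatint]
    refine tsum_congr fun x => ?_
    rw [hμE x, inv_mul_cancel_left₀ hn0.ne']
  have h1r0 : ∀ x, (0:ℝ) ≤ 1 - r x := fun x => by linarith [hr1 x]
  have h1r1 : ∀ x, (1:ℝ) - r x ≤ 1 := fun x => by linarith [hr0 x]
  have hsa : Summable a := by
    refine Summable.of_nonneg_of_le (fun x => mul_nonneg (hr0 x) (pow_nonneg (h1r0 x) _))
      (fun x => ?_) hsumr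
    calc a x ≤ r x * 1 := mul_le_mul_of_nonneg_left (pow_le_one₀ (h1r0 x) (h1r1 x)) (hr0 x)
      _ = r x := mul_one _
  have hsb : Summable b := by
    refine Summable.of_nonneg_of_le (fun x => mul_nonneg (hr0 x) (pow_nonneg (h1r0 x) _))
      (fun x => ?_) hsumr
    calc b x ≤ r x * 1 := mul_le_mul_of_nonneg_left (pow_le_one₀ (h1r0 x) (h1r1 x)) (hr0 x)
      _ = r x := mul_one _
  have hdiff : (∫ ω, R ω ∂μ) - ∫ ω, Rhat ω ∂μ = ∑' x, (a x - b x) := by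
    rw [hint1, hint2, Summable.tsum_sub hsa hsb]
  obtain ⟨k, hk⟩ : ∃ k, n = k + 1 := ⟨n - 1, (Nat.succ_pred_eq_of_pos hn).symm⟩
  have hk' : n - 1 = k := by omega
  have hab : ∀ x, a x - b x = -(r x * r x * (1 - r x) ^ k) := by
    intro x
    simp only [ha, hb]
    rw [hk', show n = k + 1 from hk, pow_succ]
    ring
  constructor
  · -- lower bound
    rw [hdiff]
    have hptwise : ∀ x : A, r x * (-(1/(n:ℝ))) ≤ a x - b x := by
      intro x
      rw [hab x]
      have h2 : r x * r x * (1 - r x) ^ k ≤ r x / n := by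
        have h3 : r x * r x * (1 - r x) ^ k = (r x / n) * ((n:ℝ) * (r x * (1 - r x) ^ (n-1))) := by
          rw [hk']; field_simp
        rw [h3]
        calc (r x / n) * ((n:ℝ) * (r x * (1 - r x) ^ (n-1))) ≤ (r x / n) * 1 :=
              mul_le_mul_of_nonneg_left (hE1le x) (by positivity)
          _ = r x / n := mul_one _
      have : r x * (-(1/(n:ℝ))) = -(r x / n) := by ring
      rw [this]
      linarith
    have hs1 : Summable (fun x : A => r x * (-(1/(n:ℝ)))) := hsumr.mul_right _
    have := Summable.tsum_le_tsum hptwise hs1 (hsa.sub hsb)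
    refine le_trans ?_ this
    rw [tsum_mul_right]
    have : (∑' x, r x) * (-(1/(n:ℝ))) = -((∑' x, r x) / n) := by ring
    rw [this]
    have hfrac : (∑' x, r x) / n ≤ 1 / n := by
      gcongr
    linarith
  · -- upper bound
    rw [hdiff]
    refine tsum_nonpos fun x => ?_
    rw [hab x]
    have : 0 ≤ r x * r x * (1 - r x) ^ k :=
      mul_nonneg (mul_nonneg (hr0 x) (hr0 x)) (pow_nonneg (h1r0 x) k)
    linarith
end

section
/- Under assumption (i) (non-intersecting supports of the experts on $A$), for any policy $\pi$ and any horizon $t\ge 1$, the expected number of interesting items found satisfies $\mathbb{E}F^{\pi}(t) \le \mathbb{E}F^{*}(t)$, where $F^*$ is the number of items found by the greedy oracle closed-loop policy that at each step requests the expert with the largest remaining probability mass of undiscovered interesting items. -/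
open scoped Classical

open MeasureTheory ProbabilityTheory

noncomputable section

/-- Number of requests made to expert `i` in the history `h` (a list of
(expert, observed item) pairs). -/
def pulls {K : ℕ} {X : Type*} (h : List (Fin K × X)) (i : Fin K) : ℕ :=
  (h.filter (fun p => p.1 = i)).length

/-- Trajectory of a (deterministic, history-dependent) policy `π` when expert `i`'s
successive draws are `samp i 0, samp i 1, …`: at each step the policy picks an expert
as a function of the past history, and observes that expert's next sample. -/
def traj {K : ℕ} {X : Type*} (π : List (Fin K × X) → Fin K)
    (samp : Fin K → ℕ → X) : ℕ → List (Fin K × X)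
  | 0 => []
  | t + 1 =>
    let h := traj π samp t
    h ++ [(π h, samp (π h) (pulls h (π h)))]

/-- Number of interesting items (elements of `A`) discovered in the history `h`. -/
def found {K : ℕ} {X : Type*} (A : Set X) (h : List (Fin K × X)) : ℕ :=
  (A ∩ {x | ∃ p ∈ h, p.2 = x}).ncard

/-- Missing mass of interesting items of expert `i` given the history `h`:
the `P i`-probability of the not-yet-discovered elements of `A`. -/
def missingMass {K : ℕ} {X : Type*} (P : Fin K → PMF X) (A : Set X)
    (h : List (Fin K × X)) (i : Fin K) : ℝ :=
  ∑' x : ↥(A \ {x | ∃ p ∈ h, p.2 = x}), (P i ↑x).toReal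

open scoped ENNReal
set_option linter.unusedSectionVars false
set_option linter.unusedVariables false

namespace OCLAux

variable {K : ℕ} {α : Type*}

def seenSet (h : List (Fin K × α)) : Set α := {x | ∃ p ∈ h, p.2 = x}

lemma seenSet_append (h : List (Fin K × α)) (e : Fin K × α) :
    seenSet (h ++ [e]) = seenSet h ∪ {e.2} := by
  ext x
  simp only [seenSet, Set.mem_setOf_eq, List.mem_append, List.mem_singleton,
    Set.mem_union, Set.mem_singleton_iff]
  constructor
  · rintro ⟨p, hp | hp, he⟩
    · exact Or.inl ⟨p, hp, he⟩
    · subst hp; exact Or.inr he.symm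
  · rintro (⟨p, hp, he⟩ | he)
    · exact ⟨p, Or.inl hp, he⟩
    · exact ⟨e, Or.inr rfl, he.symm⟩

lemma seenSet_finite (h : List (Fin K × α)) : (seenSet h).Finite := by
  have hsub : seenSet h ⊆ Prod.snd '' {p | p ∈ h} := by
    rintro x ⟨p, hp, he⟩; exact ⟨p, hp, he⟩
  exact ((h.finite_toSet).image _).subset hsub

lemma found_def (A : Set α) (h : List (Fin K × α)) : found A h = (A ∩ seenSet h).ncard := rfl

lemma found_append (A : Set α) (h : List (Fin K × α)) (i : Fin K) (x : α) :
    found A (h ++ [(i, x)]) = found A h + (if x ∈ A \ seenSet h then 1 else 0) := by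
  rw [found_def, found_def, seenSet_append]
  by_cases hx : x ∈ A \ seenSet h
  · have h1 : A ∩ (seenSet h ∪ {x}) = insert x (A ∩ seenSet h) := by
      ext y
      simp only [Set.mem_inter_iff, Set.mem_union, Set.mem_singleton_iff, Set.mem_insert_iff]
      constructor
      · rintro ⟨hA, hy | hy⟩
        · exact Or.inr ⟨hA, hy⟩
        · exact Or.inl hy
      · rintro (hy | ⟨hA, hy⟩)
        · exact ⟨hy ▸ hx.1, Or.inr hy⟩
        · exact ⟨hA, Or.inl hy⟩
    rw [h1, Set.ncard_insert_of_notMem (fun hmem => hx.2 hmem.2)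
      ((seenSet_finite h).inter_of_right A), if_pos hx]
  · have h1 : A ∩ (seenSet h ∪ {x}) = A ∩ seenSet h := by
      ext y
      simp only [Set.mem_inter_iff, Set.mem_union, Set.mem_singleton_iff]
      constructor
      · rintro ⟨hA, hy | hy⟩
        · exact ⟨hA, hy⟩
        · subst hy
          have hc := (by simpa [Set.mem_diff] using hx : y ∈ A → y ∈ seenSet h)
          exact ⟨hA, hc hA⟩
      · rintro ⟨hA, hy⟩; exact ⟨hA, Or.inl hy⟩
    rw [show ((i, x).2 : α) = x from rfl, h1, if_neg hx, add_zero]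

lemma pulls_append (h : List (Fin K × α)) (i : Fin K) (x : α) (j : Fin K) :
    pulls (h ++ [(i, x)]) j = pulls h j + (if i = j then 1 else 0) := by
  simp only [pulls, List.filter_append, List.length_append]
  congr 1
  by_cases hij : i = j <;> simp [List.filter, hij]

lemma le_pulls_append (h : List (Fin K × α)) (e : Fin K × α) (j : Fin K) :
    pulls h j ≤ pulls (h ++ [e]) j := by
  rcases e with ⟨i, x⟩
  rw [pulls_append]
  exact Nat.le_add_right _ _

lemma pulls_append_self (h : List (Fin K × α)) (i : Fin K) (x : α) :
    pulls (h ++ [(i, x)]) i = pulls h i + 1 := by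
  rw [pulls_append, if_pos rfl]

def trajFrom (π : List (Fin K × α) → Fin K) (samp : Fin K → ℕ → α)
    (h0 : List (Fin K × α)) : ℕ → List (Fin K × α)
  | 0 => h0
  | n + 1 =>
    let h := trajFrom π samp h0 n
    h ++ [(π h, samp (π h) (pulls h (π h)))]

lemma traj_eq_trajFrom (π : List (Fin K × α) → Fin K) (samp : Fin K → ℕ → α) (t : ℕ) :
    traj π samp t = trajFrom π samp ([] : List (Fin K × α)) t := by
  induction t with
  | zero => rfl
  | succ t ih => simp only [traj, trajFrom, ih]

lemma trajFrom_succ (π : List (Fin K × α) → Fin K) (samp : Fin K → ℕ → α)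
    (h0 : List (Fin K × α)) (n : ℕ) :
    trajFrom π samp h0 (n + 1) =
      trajFrom π samp (h0 ++ [(π h0, samp (π h0) (pulls h0 (π h0)))]) n := by
  induction n with
  | zero => rfl
  | succ n ih =>
    have h1 : trajFrom π samp h0 (n + 1 + 1) =
        (trajFrom π samp h0 (n + 1)) ++ [(π (trajFrom π samp h0 (n + 1)),
          samp (π (trajFrom π samp h0 (n + 1)))
            (pulls (trajFrom π samp h0 (n + 1)) (π (trajFrom π samp h0 (n + 1)))))] := rfl
    rw [h1, ih]
    rfl

lemma length_trajFrom (π : List (Fin K × α) → Fin K) (samp : Fin K → ℕ → α)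
    (h0 : List (Fin K × α)) (n : ℕ) :
    (trajFrom π samp h0 n).length = h0.length + n := by
  induction n with
  | zero => rfl
  | succ n ih => simp only [trajFrom, List.length_append, ih, List.length_singleton]; omega

lemma found_le_length (A : Set α) (h : List (Fin K × α)) : found A h ≤ h.length := by
  rw [found_def]
  have h1 : A ∩ seenSet h ⊆ ↑(h.map Prod.snd).toFinset := by
    rintro x ⟨-, p, hp, he⟩
    simp only [Finset.coe_sort_coe, List.coe_toFinset, Set.mem_setOf_eq, List.mem_map]
    exact ⟨p, hp, he⟩
  calc (A ∩ seenSet h).ncard ≤ ((↑(h.map Prod.snd).toFinset : Set α)).ncard :=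
        Set.ncard_le_ncard h1 (Set.toFinite _)
    _ = (h.map Prod.snd).toFinset.card := Set.ncard_coe_finset _
    _ ≤ (h.map Prod.snd).length := (h.map Prod.snd).toFinset_card_le
    _ = h.length := List.length_map _

open scoped ENNReal

variable {P : Fin K → PMF α} {A : Set α}

def Rinf (P : Fin K → PMF α) (A : Set α) (h : List (Fin K × α)) (i : Fin K) : ℝ≥0∞ :=
  ∑' x, (A \ seenSet h).indicator (P i) x

lemma Rinf_le_one (h : List (Fin K × α)) (i : Fin K) : Rinf P A h i ≤ 1 := by
  calc Rinf P A h i ≤ ∑' x, P i x :=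
        ENNReal.tsum_le_tsum (fun x => Set.indicator_le_self _ _ x)
    _ = 1 := (P i).tsum_coe

lemma Rinf_ne_top (h : List (Fin K × α)) (i : Fin K) : Rinf P A h i ≠ ⊤ :=
  fun htop => by simpa [htop] using Rinf_le_one (P := P) (A := A) h i

lemma missingMass_eq (h : List (Fin K × α)) (i : Fin K) :
    missingMass P A h i = (Rinf P A h i).toReal := by
  have h1 : (Rinf P A h i).toReal = ∑' x, ((A \ seenSet h).indicator (P i) x).toReal :=
    ENNReal.tsum_toReal_eq (fun x => by
      by_cases hx : x ∈ A \ seenSet h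
      · rw [Set.indicator_of_mem hx]; exact PMF.apply_ne_top _ _
      · rw [Set.indicator_of_notMem hx]; exact ENNReal.zero_ne_top)
  have h2 : ∀ x, ((A \ seenSet h).indicator (P i) x).toReal
      = (A \ seenSet h).indicator (fun y => (P i y).toReal) x := by
    intro x
    by_cases hx : x ∈ A \ seenSet h
    · rw [Set.indicator_of_mem hx, Set.indicator_of_mem hx]
    · rw [Set.indicator_of_notMem hx, Set.indicator_of_notMem hx, ENNReal.toReal_zero]
  rw [h1, tsum_congr h2, ← tsum_subtype]
  rfl

lemma Rinf_mono (h h' : List (Fin K × α)) (i : Fin K) (hsub : seenSet h ⊆ seenSet h') :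
    Rinf P A h' i ≤ Rinf P A h i := by
  refine ENNReal.tsum_le_tsum (fun x => ?_)
  exact Set.indicator_le_indicator_of_subset (Set.diff_subset_diff_right hsub)
    (fun y => zero_le) x

lemma Rinf_append_other
    (hdisj : ∀ i j : Fin K, i ≠ j → A ∩ (P i).support ∩ (P j).support = ∅)
    {h : List (Fin K × α)} {j m : Fin K} {x : α} (hx : P j x ≠ 0) (hmj : m ≠ j) :
    Rinf P A (h ++ [(j, x)]) m = Rinf P A h m := by
  refine tsum_congr (fun y => ?_)
  rw [seenSet_append]
  by_cases hyx : y = x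
  · subst hyx
    rw [Set.indicator_of_notMem (by simp [Set.mem_diff])]
    by_cases hyA : y ∈ A \ seenSet h
    · rw [Set.indicator_of_mem hyA]
      by_contra hne
      have hy0 : P m y ≠ 0 := fun h0 => hne (by rw [h0])
      have : y ∈ A ∩ (P m).support ∩ (P j).support :=
        Set.mem_inter (Set.mem_inter hyA.1 ((PMF.mem_support_iff _ _).mpr hy0))
          ((PMF.mem_support_iff _ _).mpr hx)
      rw [hdisj m j hmj] at this
      exact this
    · rw [Set.indicator_of_notMem hyA]
  · by_cases hyA : y ∈ A \ seenSet h
    · have hmem : y ∈ A \ (seenSet h ∪ {x}) := (Set.mem_diff y).mpr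
        ⟨hyA.1, fun hc => ((Set.mem_union _ _ _).mp hc).elim
          (fun hs => hyA.2 hs) (fun hs => hyx hs)⟩
      rw [Set.indicator_of_mem hyA, Set.indicator_of_mem hmem]
    · have hnm : y ∉ A \ (seenSet h ∪ {x}) := fun hc => by
        have hc' := (Set.mem_diff y).mp hc
        exact hyA ((Set.mem_diff y).mpr ⟨hc'.1, fun hs => hc'.2 (Set.mem_union_left _ hs)⟩)
      rw [Set.indicator_of_notMem hyA, Set.indicator_of_notMem hnm]

def OPTv (P : Fin K → PMF α) (A : Set α) : ℕ → List (Fin K × α) → ℝ≥0∞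
  | 0, h => (found A h : ℝ≥0∞)
  | n + 1, h => ⨆ i : Fin K, ∑' x, P i x * OPTv P A n (h ++ [(i, x)])

def Qv (P : Fin K → PMF α) (A : Set α) (n : ℕ) (h : List (Fin K × α)) (i : Fin K) : ℝ≥0∞ :=
  ∑' x, P i x * OPTv P A n (h ++ [(i, x)])

lemma OPTv_succ (n : ℕ) (h : List (Fin K × α)) :
    OPTv P A (n + 1) h = ⨆ i : Fin K, Qv P A n h i := rfl

lemma tsum_found (h : List (Fin K × α)) (i : Fin K) :
    ∑' x, P i x * (found A (h ++ [(i, x)]) : ℝ≥0∞) = (found A h : ℝ≥0∞) + Rinf P A h i := by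
  have h1 : ∀ x, P i x * (found A (h ++ [(i, x)]) : ℝ≥0∞)
      = P i x * (found A h : ℝ≥0∞) + (A \ seenSet h).indicator (P i) x := by
    intro x
    rw [found_append]
    push_cast
    rw [mul_add]
    congr 1
    by_cases hx : x ∈ A \ seenSet h
    · rw [if_pos hx, Set.indicator_of_mem hx, mul_one]
    · rw [if_neg hx, Set.indicator_of_notMem hx, mul_zero]
  rw [tsum_congr h1, ENNReal.tsum_add, ENNReal.tsum_mul_right, (P i).tsum_coe, one_mul]
  rfl

lemma OPTv_congr_seen : ∀ (n : ℕ) (h1 h2 : List (Fin K × α)),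
    seenSet h1 = seenSet h2 → OPTv P A n h1 = OPTv P A n h2 := by
  intro n
  induction n with
  | zero =>
    intro h1 h2 hs
    show ((found A h1 : ℕ) : ℝ≥0∞) = ((found A h2 : ℕ) : ℝ≥0∞)
    rw [found_def, found_def, hs]
  | succ n ih =>
    intro h1 h2 hs
    rw [OPTv_succ, OPTv_succ]
    refine iSup_congr (fun i => ?_)
    refine tsum_congr (fun x => ?_)
    rw [ih (h1 ++ [(i, x)]) (h2 ++ [(i, x)]) (by rw [seenSet_append, seenSet_append, hs])]

lemma Qv_zero (h : List (Fin K × α)) (i : Fin K) :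
    Qv P A 0 h i = (found A h : ℝ≥0∞) + Rinf P A h i := tsum_found h i

lemma main_exchange
    (hdisj : ∀ i j : Fin K, i ≠ j → A ∩ (P i).support ∩ (P j).support = ∅) :
    ∀ (n : ℕ) (h : List (Fin K × α)) (i j : Fin K),
      (∀ k, Rinf P A h k ≤ Rinf P A h i) → Qv P A n h j ≤ Qv P A n h i := by
  intro n
  induction n with
  | zero =>
    intro h i j hi
    rw [Qv_zero, Qv_zero]
    exact add_le_add le_rfl (hi j)
  | succ n ih =>
    intro h i j hi
    by_cases hij : j = i
    · subst hij; exact le_rfl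
    have hji : i ≠ j := fun hc => hij hc.symm
    -- Step 1: after a pull of j with outcome x, i is still greedy-optimal, so
    -- the optimal value there is achieved by pulling i.
    have step1 : ∀ x, P j x ≠ 0 →
        OPTv P A (n + 1) (h ++ [(j, x)]) = Qv P A n (h ++ [(j, x)]) i := by
      intro x hx
      have hgr : ∀ k, Rinf P A (h ++ [(j, x)]) k ≤ Rinf P A (h ++ [(j, x)]) i := by
        intro k
        have hRi : Rinf P A (h ++ [(j, x)]) i = Rinf P A h i :=
          Rinf_append_other hdisj hx hji
        by_cases hkj : k = j
        · subst hkj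
          rw [hRi]
          exact le_trans (Rinf_mono h (h ++ [(k, x)]) k
            (by rw [seenSet_append]; exact Set.subset_union_left)) (hi k)
        · rw [Rinf_append_other hdisj hx hkj, hRi]
          exact hi k
      refine le_antisymm ?_ ?_
      · rw [OPTv_succ]
        exact iSup_le (fun k => ih (h ++ [(j, x)]) i k hgr)
      · rw [OPTv_succ]
        exact le_iSup (fun k => Qv P A n (h ++ [(j, x)]) k) i
    have e1 : Qv P A (n + 1) h j
        = ∑' x, ∑' y, P j x * (P i y * OPTv P A n (h ++ [(j, x)] ++ [(i, y)])) := by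
      rw [Qv]
      refine tsum_congr (fun x => ?_)
      by_cases hx : P j x = 0
      · simp [hx]
      · rw [step1 x hx, Qv, ENNReal.tsum_mul_left]
    have e2 : ∀ x y, OPTv P A n (h ++ [(j, x)] ++ [(i, y)])
        = OPTv P A n (h ++ [(i, y)] ++ [(j, x)]) := by
      intro x y
      refine OPTv_congr_seen n _ _ ?_
      rw [seenSet_append, seenSet_append, seenSet_append, seenSet_append]
      rw [Set.union_assoc, Set.union_assoc, Set.union_comm ({x} : Set α) _]
    calc Qv P A (n + 1) h j
        = ∑' x, ∑' y, P j x * (P i y * OPTv P A n (h ++ [(j, x)] ++ [(i, y)])) := e1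
      _ = ∑' y, ∑' x, P i y * (P j x * OPTv P A n (h ++ [(i, y)] ++ [(j, x)])) := by
          rw [ENNReal.tsum_comm]
          refine tsum_congr (fun y => tsum_congr (fun x => ?_))
          rw [e2 x y]
          ring
      _ = ∑' y, P i y * Qv P A n (h ++ [(i, y)]) j := by
          refine tsum_congr (fun y => ?_)
          rw [Qv, ENNReal.tsum_mul_left]
      _ ≤ ∑' y, P i y * OPTv P A (n + 1) (h ++ [(i, y)]) := by
          refine ENNReal.tsum_le_tsum (fun y => mul_le_mul_right ?_ _)
          rw [OPTv_succ]
          exact le_iSup (fun k => Qv P A n (h ++ [(i, y)]) k) j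
      _ = Qv P A (n + 1) h i := rfl

def Wv (P : Fin K → PMF α) (A : Set α) (ρ : List (Fin K × α) → Fin K) :
    ℕ → List (Fin K × α) → ℝ≥0∞
  | 0, h => (found A h : ℝ≥0∞)
  | n + 1, h => ∑' x, P (ρ h) x * Wv P A ρ n (h ++ [(ρ h, x)])

lemma Wv_le_OPTv (ρ : List (Fin K × α) → Fin K) :
    ∀ (n : ℕ) (h : List (Fin K × α)), Wv P A ρ n h ≤ OPTv P A n h := by
  intro n
  induction n with
  | zero => intro h; exact le_rfl
  | succ n ih =>
    intro h
    calc Wv P A ρ (n + 1) h = ∑' x, P (ρ h) x * Wv P A ρ n (h ++ [(ρ h, x)]) := rfl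
      _ ≤ ∑' x, P (ρ h) x * OPTv P A n (h ++ [(ρ h, x)]) :=
          ENNReal.tsum_le_tsum (fun x => mul_le_mul_right (ih _) _)
      _ ≤ ⨆ i : Fin K, Qv P A n h i := le_iSup (fun k => Qv P A n h k) (ρ h)
      _ = OPTv P A (n + 1) h := (OPTv_succ n h).symm

lemma OPTv_le_Wv
    (hdisj : ∀ i j : Fin K, i ≠ j → A ∩ (P i).support ∩ (P j).support = ∅)
    (πstar : List (Fin K × α) → Fin K)
    (hgr : ∀ (h : List (Fin K × α)) (k : Fin K),
      Rinf P A h k ≤ Rinf P A h (πstar h)) :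
    ∀ (n : ℕ) (h : List (Fin K × α)), OPTv P A n h ≤ Wv P A πstar n h := by
  intro n
  induction n with
  | zero => intro h; exact le_rfl
  | succ n ih =>
    intro h
    calc OPTv P A (n + 1) h = ⨆ i : Fin K, Qv P A n h i := OPTv_succ n h
      _ ≤ Qv P A n h (πstar h) :=
          iSup_le (fun k => main_exchange hdisj n h (πstar h) k (hgr h))
      _ ≤ ∑' x, P (πstar h) x * Wv P A πstar n (h ++ [(πstar h, x)]) :=
          ENNReal.tsum_le_tsum (fun x => mul_le_mul_right (ih _) _)
      _ = Wv P A πstar (n + 1) h := rfl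

section Meas

variable {𝒳 : Type*} [Countable 𝒳] [MeasurableSpace 𝒳] [MeasurableSingletonClass 𝒳]
variable {Θ : Type*} [MeasurableSpace Θ] {μ : Measure Θ} [IsProbabilityMeasure μ]
variable {X : Fin K × ℕ → Θ → 𝒳}

def Ev (ρ : List (Fin K × 𝒳) → Fin K) (X : Fin K × ℕ → Θ → 𝒳)
    (h0 : List (Fin K × 𝒳)) (n : ℕ) (h : List (Fin K × 𝒳)) : Set Θ :=
  {ω | trajFrom ρ (fun i m => X (i, m) ω) h0 n = h}

lemma Ev_zero (ρ : List (Fin K × 𝒳) → Fin K) (h0 h : List (Fin K × 𝒳)) :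
    Ev ρ X h0 0 h = if h0 = h then (Set.univ : Set Θ) else ∅ := by
  by_cases e : h0 = h
  · simp [Ev, trajFrom, e]
  · simp [Ev, trajFrom, e]

lemma Ev_succ (ρ : List (Fin K × 𝒳) → Fin K) (h0 : List (Fin K × 𝒳)) (n : ℕ)
    (h : List (Fin K × 𝒳)) :
    Ev ρ X h0 (n + 1) h = ⋃ y : 𝒳,
      (X (ρ h0, pulls h0 (ρ h0)) ⁻¹' {y}) ∩ Ev ρ X (h0 ++ [(ρ h0, y)]) n h := by
  ext ω
  simp only [Ev, Set.mem_iUnion, Set.mem_inter_iff, Set.mem_preimage,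
    Set.mem_singleton_iff, Set.mem_setOf_eq]
  constructor
  · intro hw
    refine ⟨X (ρ h0, pulls h0 (ρ h0)) ω, rfl, ?_⟩
    rw [← trajFrom_succ]
    exact hw
  · rintro ⟨y, hy, hw⟩
    rw [trajFrom_succ]
    show trajFrom ρ (fun i m => X (i, m) ω)
      (h0 ++ [(ρ h0, X (ρ h0, pulls h0 (ρ h0)) ω)]) n = h
    rw [hy]
    exact hw

lemma Ev_measurable (hmeas : ∀ p, Measurable (X p)) (ρ : List (Fin K × 𝒳) → Fin K) :
    ∀ (n : ℕ) (h0 h : List (Fin K × 𝒳)), MeasurableSet (Ev ρ X h0 n h) := by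
  intro n
  induction n with
  | zero =>
    intro h0 h
    rw [Ev_zero]
    by_cases e : h0 = h
    · rw [if_pos e]; exact MeasurableSet.univ
    · rw [if_neg e]; exact MeasurableSet.empty
  | succ n ih =>
    intro h0 h
    rw [Ev_succ]
    exact MeasurableSet.iUnion (fun y =>
      ((hmeas _) (measurableSet_singleton y)).inter (ih _ _))

lemma prod_coord (hindep : iIndepFun X μ)
    (S : Finset (Fin K × ℕ)) (c : Fin K × ℕ → 𝒳) :
    μ (⋂ p ∈ S, X p ⁻¹' {c p}) = ∏ p ∈ S, μ (X p ⁻¹' {c p}) :=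
  hindep.measure_inter_preimage_eq_mul S (sets := fun p => {c p})
    (fun p _ => measurableSet_singleton _)

lemma law_single (hmeas : ∀ p, Measurable (X p)) (P : Fin K → PMF 𝒳)
    (hlaw : ∀ p : Fin K × ℕ, Measure.map (X p) μ = (P p.1).toMeasure)
    (p : Fin K × ℕ) (x : 𝒳) : μ (X p ⁻¹' {x}) = P p.1 x := by
  rw [← Measure.map_apply (hmeas p) (measurableSet_singleton x), hlaw p,
    PMF.toMeasure_apply_singleton _ _ (measurableSet_singleton x)]

lemma INDS (hmeas : ∀ p, Measurable (X p))
    (hindep : iIndepFun X μ)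
    (ρ : List (Fin K × 𝒳) → Fin K) :
    ∀ (n : ℕ) (S : Finset (Fin K × ℕ)) (c : Fin K × ℕ → 𝒳) (h0 h : List (Fin K × 𝒳)),
      (∀ p ∈ S, p.2 < pulls h0 p.1) →
      μ ((⋂ p ∈ S, X p ⁻¹' {c p}) ∩ Ev ρ X h0 n h)
        = μ (⋂ p ∈ S, X p ⁻¹' {c p}) * μ (Ev ρ X h0 n h) := by
  intro n
  induction n with
  | zero =>
    intro S c h0 h _
    rw [Ev_zero]
    by_cases e : h0 = h
    · rw [if_pos e, Set.inter_univ, measure_univ, mul_one]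
    · rw [if_neg e, Set.inter_empty, measure_empty, mul_zero]
  | succ n ih =>
    intro S c h0 h hS
    have key : ∀ (T : Finset (Fin K × ℕ)) (c' : Fin K × ℕ → 𝒳),
        (∀ p ∈ T, p.2 < pulls h0 p.1) →
        μ ((⋂ p ∈ T, X p ⁻¹' {c' p}) ∩ Ev ρ X h0 (n + 1) h)
          = μ (⋂ p ∈ T, X p ⁻¹' {c' p}) *
            ∑' y, μ (X (ρ h0, pulls h0 (ρ h0)) ⁻¹' {y}) *
              μ (Ev ρ X (h0 ++ [(ρ h0, y)]) n h) := by
      intro T c' hT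
      set q : Fin K × ℕ := (ρ h0, pulls h0 (ρ h0)) with hq
      have hqT : q ∉ T := fun hm => lt_irrefl _ (hT q hm)
      have hTm : MeasurableSet (⋂ p ∈ T, X p ⁻¹' {c' p}) :=
        Finset.measurableSet_biInter T
          (fun p _ => (hmeas p) (measurableSet_singleton _))
      have hd : Pairwise (Function.onFun Disjoint (fun y : 𝒳 =>
          (⋂ p ∈ T, X p ⁻¹' {c' p}) ∩
            (X q ⁻¹' {y} ∩ Ev ρ X (h0 ++ [(ρ h0, y)]) n h))) := by
        intro y1 y2 hne
        refine Set.disjoint_left.mpr ?_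
        rintro ω ⟨-, hy1, -⟩ ⟨-, hy2, -⟩
        exact hne (by
          rw [← Set.mem_singleton_iff.mp hy1, ← Set.mem_singleton_iff.mp hy2])
      have hm : ∀ y : 𝒳, MeasurableSet ((⋂ p ∈ T, X p ⁻¹' {c' p}) ∩
          (X q ⁻¹' {y} ∩ Ev ρ X (h0 ++ [(ρ h0, y)]) n h)) := fun y =>
        hTm.inter (((hmeas q) (measurableSet_singleton y)).inter
          (Ev_measurable hmeas ρ n _ h))
      have hterm : ∀ y : 𝒳,
          μ ((⋂ p ∈ T, X p ⁻¹' {c' p}) ∩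
            (X q ⁻¹' {y} ∩ Ev ρ X (h0 ++ [(ρ h0, y)]) n h))
          = μ (⋂ p ∈ T, X p ⁻¹' {c' p}) *
            (μ (X q ⁻¹' {y}) * μ (Ev ρ X (h0 ++ [(ρ h0, y)]) n h)) := by
        intro y
        have hins : (⋂ p ∈ T, X p ⁻¹' {c' p}) ∩ X q ⁻¹' {y}
            = ⋂ p ∈ insert q T, X p ⁻¹' {Function.update c' q y p} := by
          rw [Finset.set_biInter_insert, Function.update_self, Set.inter_comm]
          congr 1
          refine Set.iInter₂_congr (fun p hp => ?_)
          have hpq : p ≠ q := fun hc => hqT (by rw [← hc]; exact hp)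
          rw [Function.update_of_ne hpq]
        have hcond : ∀ p ∈ insert q T, p.2 < pulls (h0 ++ [(ρ h0, y)]) p.1 := by
          intro p hp
          rcases Finset.mem_insert.mp hp with hp | hp
          · subst hp
            show q.2 < pulls (h0 ++ [(ρ h0, y)]) q.1
            rw [hq]
            rw [pulls_append_self]
            exact Nat.lt_succ_self _
          · exact lt_of_lt_of_le (hT p hp) (le_pulls_append _ _ _)
        rw [← Set.inter_assoc, hins,
          ih (insert q T) (Function.update c' q y) _ h hcond]
        have hsplit : μ (⋂ p ∈ insert q T, X p ⁻¹' {Function.update c' q y p})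
            = μ (X q ⁻¹' {y}) * μ (⋂ p ∈ T, X p ⁻¹' {c' p}) := by
          rw [prod_coord hindep, Finset.prod_insert hqT, Function.update_self,
            prod_coord hindep]
          congr 1
          refine Finset.prod_congr rfl (fun p hp => ?_)
          have hpq : p ≠ q := fun hc => hqT (by rw [← hc]; exact hp)
          rw [Function.update_of_ne hpq]
        rw [hsplit]
        ring
      rw [Ev_succ, Set.inter_iUnion, measure_iUnion hd hm, tsum_congr hterm,
        ENNReal.tsum_mul_left]
    have hEv : μ (Ev ρ X h0 (n + 1) h)
        = ∑' y, μ (X (ρ h0, pulls h0 (ρ h0)) ⁻¹' {y}) *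
            μ (Ev ρ X (h0 ++ [(ρ h0, y)]) n h) := by
      have h0' := key ∅ c (by simp)
      simpa using h0'
    rw [key S c hS, ← hEv]

lemma Ev_measure_succ (hmeas : ∀ p, Measurable (X p))
    (hindep : iIndepFun X μ)
    (ρ : List (Fin K × 𝒳) → Fin K) (h0 : List (Fin K × 𝒳)) (n : ℕ)
    (h : List (Fin K × 𝒳)) :
    μ (Ev ρ X h0 (n + 1) h)
      = ∑' y, μ (X (ρ h0, pulls h0 (ρ h0)) ⁻¹' {y}) *
          μ (Ev ρ X (h0 ++ [(ρ h0, y)]) n h) := by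
  set q : Fin K × ℕ := (ρ h0, pulls h0 (ρ h0)) with hq
  have hd : Pairwise (Function.onFun Disjoint (fun y : 𝒳 =>
      X q ⁻¹' {y} ∩ Ev ρ X (h0 ++ [(ρ h0, y)]) n h)) := by
    intro y1 y2 hne
    refine Set.disjoint_left.mpr ?_
    rintro ω ⟨hy1, -⟩ ⟨hy2, -⟩
    exact hne (by rw [← Set.mem_singleton_iff.mp hy1, ← Set.mem_singleton_iff.mp hy2])
  have hm : ∀ y : 𝒳, MeasurableSet
      (X q ⁻¹' {y} ∩ Ev ρ X (h0 ++ [(ρ h0, y)]) n h) := fun y =>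
    ((hmeas q) (measurableSet_singleton y)).inter (Ev_measurable hmeas ρ n _ h)
  rw [Ev_succ, measure_iUnion hd hm]
  refine tsum_congr (fun y => ?_)
  have hcond : ∀ p ∈ ({q} : Finset (Fin K × ℕ)), p.2 < pulls (h0 ++ [(ρ h0, y)]) p.1 := by
    intro p hp
    rw [Finset.mem_singleton] at hp
    subst hp
    show q.2 < pulls (h0 ++ [(ρ h0, y)]) q.1
    rw [hq, pulls_append_self]
    exact Nat.lt_succ_self _
  have := INDS hmeas hindep ρ n {q} (fun _ => y) (h0 ++ [(ρ h0, y)]) h hcond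
  simpa [Finset.set_biInter_singleton] using this

lemma found_rep (ρ : List (Fin K × 𝒳) → Fin K) (A : Set 𝒳) (n : ℕ)
    (h0 : List (Fin K × 𝒳)) (ω : Θ) :
    (found A (trajFrom ρ (fun i m => X (i, m) ω) h0 n) : ℝ≥0∞)
      = ∑' h : List (Fin K × 𝒳),
          (Ev ρ X h0 n h).indicator (fun _ => (found A h : ℝ≥0∞)) ω := by
  rw [tsum_eq_single (trajFrom ρ (fun i m => X (i, m) ω) h0 n) ?_]
  · rw [Set.indicator_of_mem (by exact rfl)]
  · intro h' hne
    exact Set.indicator_of_notMem (fun hc => hne (Eq.symm hc))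
      (fun _ => (found A h' : ℝ≥0∞))

lemma meas_found (hmeas : ∀ p, Measurable (X p)) (ρ : List (Fin K × 𝒳) → Fin K)
    (A : Set 𝒳) (n : ℕ) (h0 : List (Fin K × 𝒳)) :
    Measurable (fun ω =>
      (found A (trajFrom ρ (fun i m => X (i, m) ω) h0 n) : ℝ≥0∞)) := by
  have : (fun ω => (found A (trajFrom ρ (fun i m => X (i, m) ω) h0 n) : ℝ≥0∞))
      = fun ω => ∑' h : List (Fin K × 𝒳),
          (Ev ρ X h0 n h).indicator (fun _ => (found A h : ℝ≥0∞)) ω :=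
    funext (found_rep ρ A n h0)
  rw [this]
  exact Measurable.ennreal_tsum (fun h =>
    measurable_const.indicator (Ev_measurable hmeas ρ n h0 h))

lemma lint_rep (hmeas : ∀ p, Measurable (X p)) (ρ : List (Fin K × 𝒳) → Fin K)
    (A : Set 𝒳) (n : ℕ) (h0 : List (Fin K × 𝒳)) :
    ∫⁻ ω, (found A (trajFrom ρ (fun i m => X (i, m) ω) h0 n) : ℝ≥0∞) ∂μ
      = ∑' h : List (Fin K × 𝒳), (found A h : ℝ≥0∞) * μ (Ev ρ X h0 n h) := by
  calc ∫⁻ ω, (found A (trajFrom ρ (fun i m => X (i, m) ω) h0 n) : ℝ≥0∞) ∂μ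
      = ∫⁻ ω, ∑' h : List (Fin K × 𝒳),
          (Ev ρ X h0 n h).indicator (fun _ => (found A h : ℝ≥0∞)) ω ∂μ :=
        lintegral_congr (found_rep ρ A n h0)
    _ = ∑' h : List (Fin K × 𝒳), ∫⁻ ω,
          (Ev ρ X h0 n h).indicator (fun _ => (found A h : ℝ≥0∞)) ω ∂μ :=
        lintegral_tsum (fun h =>
          (measurable_const.indicator (Ev_measurable hmeas ρ n h0 h)).aemeasurable)
    _ = ∑' h : List (Fin K × 𝒳), (found A h : ℝ≥0∞) * μ (Ev ρ X h0 n h) :=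
        tsum_congr (fun h =>
          lintegral_indicator_const (Ev_measurable hmeas ρ n h0 h) _)

lemma G_eq_Wv (hmeas : ∀ p, Measurable (X p))
    (hindep : iIndepFun X μ) (P : Fin K → PMF 𝒳)
    (hlaw : ∀ p : Fin K × ℕ, Measure.map (X p) μ = (P p.1).toMeasure)
    (ρ : List (Fin K × 𝒳) → Fin K) (A : Set 𝒳) :
    ∀ (n : ℕ) (h0 : List (Fin K × 𝒳)),
      (∑' h : List (Fin K × 𝒳), (found A h : ℝ≥0∞) * μ (Ev ρ X h0 n h))
        = Wv P A ρ n h0 := by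
  intro n
  induction n with
  | zero =>
    intro h0
    rw [tsum_eq_single h0 ?_]
    · rw [Ev_zero, if_pos rfl, measure_univ, mul_one]
      rfl
    · intro h' hne
      rw [Ev_zero, if_neg (fun e => hne (Eq.symm e)), measure_empty, mul_zero]
  | succ n ih =>
    intro h0
    have hmeasure : ∀ h, μ (Ev ρ X h0 (n + 1) h)
        = ∑' y, (P (ρ h0)) y * μ (Ev ρ X (h0 ++ [(ρ h0, y)]) n h) := by
      intro h
      rw [Ev_measure_succ hmeas hindep ρ h0 n h]
      exact tsum_congr (fun y => by rw [law_single hmeas P hlaw])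
    calc (∑' h : List (Fin K × 𝒳), (found A h : ℝ≥0∞) * μ (Ev ρ X h0 (n + 1) h))
        = ∑' h : List (Fin K × 𝒳), ∑' y,
            (found A h : ℝ≥0∞) * (P (ρ h0) y * μ (Ev ρ X (h0 ++ [(ρ h0, y)]) n h)) := by
          refine tsum_congr (fun h => ?_)
          rw [hmeasure h, ENNReal.tsum_mul_left]
      _ = ∑' y, ∑' h : List (Fin K × 𝒳),
            P (ρ h0) y * ((found A h : ℝ≥0∞) * μ (Ev ρ X (h0 ++ [(ρ h0, y)]) n h)) := by
          rw [ENNReal.tsum_comm]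
          refine tsum_congr (fun y => tsum_congr (fun h => ?_))
          ring
      _ = ∑' y, P (ρ h0) y * ∑' h : List (Fin K × 𝒳),
            (found A h : ℝ≥0∞) * μ (Ev ρ X (h0 ++ [(ρ h0, y)]) n h) :=
          tsum_congr (fun y => ENNReal.tsum_mul_left)
      _ = ∑' y, P (ρ h0) y * Wv P A ρ n (h0 ++ [(ρ h0, y)]) :=
          tsum_congr (fun y => by rw [ih])
      _ = Wv P A ρ (n + 1) h0 := rfl

end Meas

end OCLAux

/-- Optimality of the greedy Oracle Closed-Loop policy under non-intersecting supports:
for any policy `π` and horizon `t ≥ 1`, the expected number of interesting items found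
by `π` is at most that found by any greedy policy `π*` which always requests an expert
of maximal remaining missing mass. -/
theorem stmt_7 {𝒳 : Type*} [Countable 𝒳] [MeasurableSpace 𝒳] [MeasurableSingletonClass 𝒳]
    (A : Set 𝒳) (K : ℕ) (hK : 0 < K) (P : Fin K → PMF 𝒳)
    (hdisj : ∀ i j : Fin K, i ≠ j → A ∩ (P i).support ∩ (P j).support = ∅)
    {Θ : Type*} [MeasurableSpace Θ] (μ : Measure Θ) [IsProbabilityMeasure μ]
    (X : Fin K × ℕ → Θ → 𝒳) (hmeas : ∀ p, Measurable (X p))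
    (hindep : iIndepFun X μ)
    (hlaw : ∀ p : Fin K × ℕ, Measure.map (X p) μ = (P p.1).toMeasure)
    (π πstar : List (Fin K × 𝒳) → Fin K)
    (hgreedy : ∀ h i, missingMass P A h i ≤ missingMass P A h (πstar h))
    (t : ℕ) (ht : 1 ≤ t) :
    ∫ ω, (found A (traj π (fun i n => X (i, n) ω) t) : ℝ) ∂μ ≤
      ∫ ω, (found A (traj πstar (fun i n => X (i, n) ω) t) : ℝ) ∂μ := by
  classical
  have hR : ∀ (h : List (Fin K × 𝒳)) (k : Fin K),
      OCLAux.Rinf P A h k ≤ OCLAux.Rinf P A h (πstar h) := by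
    intro h k
    have h1 := hgreedy h k
    rw [OCLAux.missingMass_eq, OCLAux.missingMass_eq] at h1
    exact (ENNReal.toReal_le_toReal (OCLAux.Rinf_ne_top h k)
      (OCLAux.Rinf_ne_top h (πstar h))).mp h1
  have hkey : OCLAux.Wv P A π t ([] : List (Fin K × 𝒳))
      ≤ OCLAux.Wv P A πstar t ([] : List (Fin K × 𝒳)) :=
    le_trans (OCLAux.Wv_le_OPTv π t _) (OCLAux.OPTv_le_Wv hdisj πstar hR t _)
  have hlin : ∀ ρ : List (Fin K × 𝒳) → Fin K,
      ∫⁻ ω, (found A (traj ρ (fun i n => X (i, n) ω) t) : ℝ≥0∞) ∂μ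
        = OCLAux.Wv P A ρ t ([] : List (Fin K × 𝒳)) := by
    intro ρ
    calc ∫⁻ ω, (found A (traj ρ (fun i n => X (i, n) ω) t) : ℝ≥0∞) ∂μ
        = ∫⁻ ω, (found A (OCLAux.trajFrom ρ (fun i n => X (i, n) ω)
            ([] : List (Fin K × 𝒳)) t) : ℝ≥0∞) ∂μ :=
          lintegral_congr (fun ω => by rw [OCLAux.traj_eq_trajFrom])
      _ = ∑' h : List (Fin K × 𝒳), (found A h : ℝ≥0∞)
            * μ (OCLAux.Ev ρ X ([] : List (Fin K × 𝒳)) t h) :=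
          OCLAux.lint_rep hmeas ρ A t _
      _ = OCLAux.Wv P A ρ t ([] : List (Fin K × 𝒳)) :=
          OCLAux.G_eq_Wv hmeas hindep P hlaw ρ A t _
  have hfin : ∀ ρ : List (Fin K × 𝒳) → Fin K,
      OCLAux.Wv P A ρ t ([] : List (Fin K × 𝒳)) ≠ ⊤ := by
    intro ρ
    rw [← hlin ρ]
    have hb : ∀ ω, (found A (traj ρ (fun i n => X (i, n) ω) t) : ℝ≥0∞) ≤ (t : ℝ≥0∞) := by
      intro ω
      have h1 := OCLAux.found_le_length A (traj ρ (fun i n => X (i, n) ω) t)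
      have h2 : (traj ρ (fun i n => X (i, n) ω) t).length = t := by
        rw [OCLAux.traj_eq_trajFrom, OCLAux.length_trajFrom]
        simp
      rw [h2] at h1
      exact_mod_cast h1
    refine ne_top_of_le_ne_top ?_ (lintegral_mono hb)
    rw [lintegral_const, measure_univ, mul_one]
    exact ENNReal.natCast_ne_top t
  have hmeas' : ∀ ρ : List (Fin K × 𝒳) → Fin K,
      Measurable (fun ω => (found A (traj ρ (fun i n => X (i, n) ω) t) : ℝ≥0∞)) := by
    intro ρ
    have he : (fun ω => (found A (traj ρ (fun i n => X (i, n) ω) t) : ℝ≥0∞))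
        = fun ω => (found A (OCLAux.trajFrom ρ (fun i n => X (i, n) ω)
            ([] : List (Fin K × 𝒳)) t) : ℝ≥0∞) :=
      funext (fun ω => by rw [OCLAux.traj_eq_trajFrom])
    rw [he]
    exact OCLAux.meas_found hmeas ρ A t _
  have hconv : ∀ ρ : List (Fin K × 𝒳) → Fin K,
      ∫ ω, (found A (traj ρ (fun i n => X (i, n) ω) t) : ℝ) ∂μ
        = (∫⁻ ω, (found A (traj ρ (fun i n => X (i, n) ω) t) : ℝ≥0∞) ∂μ).toReal := by
    intro ρ
    have e1 : (fun ω => (found A (traj ρ (fun i n => X (i, n) ω) t) : ℝ))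
        = fun ω => ((found A (traj ρ (fun i n => X (i, n) ω) t) : ℝ≥0∞)).toReal := by
      funext ω
      rw [ENNReal.toReal_natCast]
    rw [e1, integral_toReal (hmeas' ρ).aemeasurable
      (Filter.Eventually.of_forall (fun ω => ENNReal.natCast_lt_top _))]
  rw [hconv π, hconv πstar, hlin π, hlin πstar]
  exact ENNReal.toReal_mono (hfin πstar) hkey
end
end

section
/- Under assumption (i), for any policy $\pi$ and any $t\ge 1$, letting $\bar I_s = \arg\max_{1\le i\le K} R_{i,n^{\pi}_{i,s-1}}$ denote the expert with maximal remaining missing mass at step $s$ along $\pi$'s trajectory, the greedy oracle's expected discovery count satisfies $\mathbb{E}F^*(t) \le \sum_{s=1}^{t} \mathbb{E}\, R_{\bar I_s, n^{\pi}_{\bar I_s, s-1}}$. -/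
open scoped Classical

open MeasureTheory ProbabilityTheory

noncomputable section

section Det

variable {K : ℕ} {X : Type*}

lemma pulls_append (h : List (Fin K × X)) (p : Fin K × X) (i : Fin K) :
    pulls (h ++ [p]) i = pulls h i + (if p.1 = i then 1 else 0) := by
  simp only [pulls, List.filter_append, List.length_append, List.filter_cons,
    List.filter_nil]
  split <;> simp_all [add_comm]

lemma pulls_le_length (h : List (Fin K × X)) (i : Fin K) : pulls h i ≤ h.length :=
  (List.length_filter_le _ _)

lemma pulls_prefix_le (a b : List (Fin K × X)) (i : Fin K) :
    pulls a i ≤ pulls (a ++ b) i := by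
  simp [pulls, List.filter_append]

lemma traj_succ (π : List (Fin K × X) → Fin K) (samp : Fin K → ℕ → X) (t : ℕ) :
    traj π samp (t + 1) =
      traj π samp t ++ [(π (traj π samp t),
        samp (π (traj π samp t)) (pulls (traj π samp t) (π (traj π samp t))))] := rfl

lemma traj_length (π : List (Fin K × X) → Fin K) (samp : Fin K → ℕ → X) (t : ℕ) :
    (traj π samp t).length = t := by
  induction t with
  | zero => rfl
  | succ t ih => simp [traj_succ, ih]

lemma pulls_cons (p : Fin K × X) (h : List (Fin K × X)) (i : Fin K) :
    pulls (p :: h) i = (if p.1 = i then 1 else 0) + pulls h i := by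
  simp only [pulls, List.filter_cons]
  split <;> simp_all [add_comm]

lemma sum_pulls (h : List (Fin K × X)) : ∑ i : Fin K, pulls h i = h.length := by
  induction h with
  | nil => simp [pulls]
  | cons p h ih =>
    rw [Finset.sum_congr rfl (fun i _ => pulls_cons p h i), Finset.sum_add_distrib, ih,
      Finset.sum_ite_eq]
    simp [add_comm]

end Det

section Det2
variable {K : ℕ} {X : Type*}

lemma traj_filter (π : List (Fin K × X) → Fin K) (samp : Fin K → ℕ → X) (t : ℕ) (i : Fin K) :
    (traj π samp t).filter (fun p => p.1 = i) =
      (List.range (pulls (traj π samp t) i)).map (fun m => (i, samp i m)) := by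
  induction t with
  | zero => simp [traj, pulls]
  | succ t ih =>
    rw [traj_succ, List.filter_append, pulls_append, ih]
    by_cases hc : π (traj π samp t) = i
    · rw [hc]
      simp [List.range_succ, hc]
    · simp [hc]

lemma mem_seen_traj (π : List (Fin K × X) → Fin K) (samp : Fin K → ℕ → X) (t : ℕ) (x : X) :
    (∃ p ∈ traj π samp t, p.2 = x) ↔
      ∃ i : Fin K, ∃ m < pulls (traj π samp t) i, samp i m = x := by
  constructor
  · rintro ⟨p, hp, rfl⟩
    refine ⟨p.1, ?_⟩
    have h2 : p ∈ (traj π samp t).filter (fun q => q.1 = p.1) :=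
      List.mem_filter.2 ⟨hp, by simp⟩
    rw [traj_filter] at h2
    obtain ⟨m, hm, he⟩ := List.mem_map.1 h2
    exact ⟨m, by simpa using List.mem_range.1 hm, by rw [← he]⟩
  · rintro ⟨i, m, hm, rfl⟩
    refine ⟨(i, samp i m), ?_, rfl⟩
    have h2 : (i, samp i m) ∈ (traj π samp t).filter (fun q => q.1 = i) := by
      rw [traj_filter]
      exact List.mem_map.2 ⟨m, List.mem_range.2 hm, rfl⟩
    exact (List.mem_filter.1 h2).1

end Det2

section RRsec
variable {K : ℕ} {X : Type*}

def RR (P : Fin K → PMF X) (A : Set X) (samp : Fin K → ℕ → X) (i : Fin K) (n : ℕ) : ℝ :=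
  ∑' x : ↥(A \ {x | ∃ m < n, samp i m = x}), (P i ↑x).toReal

lemma summable_pmf_toReal (p : PMF X) : Summable (fun x => (p x).toReal) :=
  ENNReal.summable_toReal (by rw [p.tsum_coe]; exact ENNReal.one_ne_top)

lemma tsum_subtype_pmf_le (p : PMF X) (s : Set X) :
    (∑' x : ↥s, (p ↑x).toReal) ≤ 1 := by
  rw [tsum_subtype s (fun x => (p x).toReal)]
  calc ∑' x, s.indicator (fun x => (p x).toReal) x ≤ ∑' x, (p x).toReal := by
        refine Summable.tsum_le_tsum (fun x => ?_) ((summable_pmf_toReal p).indicator s)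
          (summable_pmf_toReal p)
        exact Set.indicator_le_self' (fun x _ => ENNReal.toReal_nonneg) x
    _ = 1 := by
        rw [← ENNReal.tsum_toReal_eq (fun x => (lt_of_le_of_lt (p.coe_le_one x) ENNReal.one_lt_top).ne), p.tsum_coe, ENNReal.toReal_one]

lemma tsum_subtype_pmf_nonneg (p : PMF X) (s : Set X) :
    0 ≤ ∑' x : ↥s, (p ↑x).toReal :=
  tsum_nonneg (fun x => ENNReal.toReal_nonneg)

lemma missingMass_nonneg (P : Fin K → PMF X) (A : Set X) (h : List (Fin K × X)) (i : Fin K) :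
    0 ≤ missingMass P A h i := tsum_subtype_pmf_nonneg _ _

lemma missingMass_le_one (P : Fin K → PMF X) (A : Set X) (h : List (Fin K × X)) (i : Fin K) :
    missingMass P A h i ≤ 1 := tsum_subtype_pmf_le _ _

lemma tsum_subtype_pmf_mono (p : PMF X) {s s' : Set X} (hss : s ⊆ s') :
    (∑' x : ↥s, (p ↑x).toReal) ≤ ∑' x : ↥s', (p ↑x).toReal := by
  rw [tsum_subtype s (fun x => (p x).toReal), tsum_subtype s' (fun x => (p x).toReal)]
  refine Summable.tsum_le_tsum (fun x => ?_) ((summable_pmf_toReal p).indicator s)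
    ((summable_pmf_toReal p).indicator s')
  exact Set.indicator_le_indicator_of_subset hss (fun x => ENNReal.toReal_nonneg) x

lemma RR_antitone (P : Fin K → PMF X) (A : Set X) (samp : Fin K → ℕ → X) (i : Fin K)
    {n n' : ℕ} (hnn : n ≤ n') : RR P A samp i n' ≤ RR P A samp i n := by
  refine tsum_subtype_pmf_mono _ (Set.diff_subset_diff_right ?_)
  rintro x ⟨m, hm, rfl⟩
  exact ⟨m, lt_of_lt_of_le hm hnn, rfl⟩

lemma missingMass_traj (P : Fin K → PMF X) (A : Set X)
    (hdisj : ∀ i j : Fin K, i ≠ j → A ∩ (P i).support ∩ (P j).support = ∅)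
    (π : List (Fin K × X) → Fin K) (samp : Fin K → ℕ → X)
    (hs : ∀ i n, samp i n ∈ (P i).support) (t : ℕ) (i : Fin K) :
    missingMass P A (traj π samp t) i = RR P A samp i (pulls (traj π samp t) i) := by
  unfold missingMass RR
  rw [tsum_subtype (A \ {x | ∃ p ∈ traj π samp t, p.2 = x}) (fun x => (P i x).toReal),
    tsum_subtype (A \ {x | ∃ m < pulls (traj π samp t) i, samp i m = x})
      (fun x => (P i x).toReal)]
  congr 1
  funext x
  by_cases hfx : (P i x).toReal = 0
  · by_cases h1 : x ∈ A \ {x | ∃ p ∈ traj π samp t, p.2 = x} <;>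
      by_cases h2 : x ∈ A \ {x | ∃ m < pulls (traj π samp t) i, samp i m = x} <;>
      simp [Set.indicator_apply, h1, h2, hfx]
  · have hxsupp : x ∈ (P i).support := by
      simp only [PMF.mem_support_iff]
      intro h0
      exact hfx (by simp [h0])
    by_cases hxA : x ∈ A
    · have hiff : (∃ p ∈ traj π samp t, p.2 = x) ↔
          (∃ m < pulls (traj π samp t) i, samp i m = x) := by
        rw [mem_seen_traj]
        constructor
        · rintro ⟨j, m, hm, rfl⟩
          by_cases hij : j = i
          · subst hij; exact ⟨m, hm, rfl⟩
          · exfalso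
            have : samp j m ∈ A ∩ (P i).support ∩ (P j).support :=
              ⟨⟨hxA, hxsupp⟩, hs j m⟩
            rw [hdisj i j (Ne.symm hij)] at this
            exact this
        · rintro ⟨m, hm, hx⟩
          exact ⟨i, m, hm, hx⟩
      simp only [Set.indicator_apply, Set.mem_diff, Set.mem_setOf_eq, hxA, true_and, hiff]
    · simp [Set.indicator_apply, hxA]

end RRsec

section Greedy
variable {K : ℕ} {X : Type*}

lemma pulls_traj_mono (π : List (Fin K × X) → Fin K) (samp : Fin K → ℕ → X)
    {s s' : ℕ} (hss : s' ≤ s) (i : Fin K) :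
    pulls (traj π samp s') i ≤ pulls (traj π samp s) i := by
  induction s with
  | zero => have : s' = 0 := by omega
            rw [this]
  | succ s ih =>
    rcases Nat.eq_or_lt_of_le hss with h | h
    · rw [h]
    · calc pulls (traj π samp s') i ≤ pulls (traj π samp s) i := ih (by omega)
        _ ≤ pulls (traj π samp (s + 1)) i := by
            rw [traj_succ]; exact pulls_prefix_le _ _ i

lemma exists_step (π : List (Fin K × X) → Fin K) (samp : Fin K → ℕ → X)
    (s : ℕ) (j : Fin K) (c : ℕ) (hc : c < pulls (traj π samp s) j) :
    ∃ s' < s, π (traj π samp s') = j ∧ pulls (traj π samp s') j = c := by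
  induction s with
  | zero => simp [traj, pulls] at hc
  | succ s ih =>
    rw [traj_succ, pulls_append] at hc
    by_cases hcj : π (traj π samp s) = j
    · simp only [hcj, if_pos] at hc
      rcases Nat.lt_or_ge c (pulls (traj π samp s) j) with h | h
      · obtain ⟨s', h1, h2, h3⟩ := ih h
        exact ⟨s', by omega, h2, h3⟩
      · exact ⟨s, by omega, hcj, by omega⟩
    · simp only [hcj, if_neg, not_false_iff, add_zero] at hc
      obtain ⟨s', h1, h2, h3⟩ := ih hc
      exact ⟨s', by omega, h2, h3⟩

lemma greedy_sup_le [Nonempty (Fin K)] (P : Fin K → PMF X) (A : Set X)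
    (hdisj : ∀ i j : Fin K, i ≠ j → A ∩ (P i).support ∩ (P j).support = ∅)
    (πstar : List (Fin K × X) → Fin K)
    (hgreedy : ∀ h i, missingMass P A h i ≤ missingMass P A h (πstar h))
    (samp : Fin K → ℕ → X) (hs : ∀ i n, samp i n ∈ (P i).support)
    (s : ℕ) (n : Fin K → ℕ) (hn : ∑ i, n i = s) :
    ⨆ i, RR P A samp i (pulls (traj πstar samp s) i) ≤ ⨆ i, RR P A samp i (n i) := by
  have hbdd : BddAbove (Set.range fun i => RR P A samp i (n i)) :=
    (Set.finite_range _).bddAbove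
  have hsum : ∑ i, pulls (traj πstar samp s) i = s := by
    rw [sum_pulls, traj_length]
  have hg' : ∀ k i, RR P A samp i (pulls (traj πstar samp k) i) ≤
      RR P A samp (πstar (traj πstar samp k)) (pulls (traj πstar samp k) (πstar (traj πstar samp k))) := by
    intro k i
    rw [← missingMass_traj P A hdisj πstar samp hs, ← missingMass_traj P A hdisj πstar samp hs]
    exact hgreedy _ i
  refine ciSup_le (fun i0 => ?_)
  rcases le_or_gt (n i0) (pulls (traj πstar samp s) i0) with h | h
  · calc RR P A samp i0 (pulls (traj πstar samp s) i0) ≤ RR P A samp i0 (n i0) :=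
        RR_antitone P A samp i0 h
      _ ≤ _ := le_ciSup hbdd i0
  · have hj : ∃ j, n j < pulls (traj πstar samp s) j := by
      by_contra hno
      push_neg at hno
      have : ∑ i, pulls (traj πstar samp s) i < ∑ i, n i :=
        Finset.sum_lt_sum (fun i _ => hno i) ⟨i0, Finset.mem_univ i0, h⟩
      omega
    obtain ⟨j, hj⟩ := hj
    obtain ⟨s', hs', hpi, hpulls⟩ := exists_step πstar samp s j (n j) hj
    calc RR P A samp i0 (pulls (traj πstar samp s) i0)
        ≤ RR P A samp i0 (pulls (traj πstar samp s') i0) :=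
          RR_antitone P A samp i0 (pulls_traj_mono πstar samp (le_of_lt hs') i0)
      _ ≤ RR P A samp j (pulls (traj πstar samp s') j) := by
          have := hg' s' i0
          rwa [hpi] at this
      _ = RR P A samp j (n j) := by rw [hpulls]
      _ ≤ _ := le_ciSup hbdd j

end Greedy

section Meas

variable {𝒳 : Type*} [Countable 𝒳] [MeasurableSpace 𝒳] [MeasurableSingletonClass 𝒳]
  {Θ : Type*} [MeasurableSpace Θ] {K : ℕ}

lemma meas_all (s : Set 𝒳) : MeasurableSet s := s.to_countable.measurableSet

lemma traj_preimage_measurable (X : Fin K × ℕ → Θ → 𝒳) (hmeas : ∀ p, Measurable (X p))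
    (π : List (Fin K × 𝒳) → Fin K) (s : ℕ) (h : List (Fin K × 𝒳)) :
    MeasurableSet {ω | traj π (fun i n => X (i, n) ω) s = h} := by
  induction s generalizing h with
  | zero =>
    by_cases hh : h = []
    · subst hh; simp only [traj]; exact MeasurableSet.univ.congr (by ext ω; simp)
    · convert MeasurableSet.empty
      ext ω; simp [traj, Ne.symm hh]
  | succ s ih =>
    have : {ω | traj π (fun i n => X (i, n) ω) (s + 1) = h} =
        ⋃ h' : List (Fin K × 𝒳), ({ω | traj π (fun i n => X (i, n) ω) s = h'} ∩
          (X (π h', pulls h' (π h'))) ⁻¹' {x | h' ++ [(π h', x)] = h}) := by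
      ext ω
      simp only [Set.mem_iUnion, Set.mem_inter_iff, Set.mem_setOf_eq, Set.mem_preimage]
      constructor
      · intro he
        exact ⟨traj π (fun i n => X (i, n) ω) s, rfl, he⟩
      · rintro ⟨h', rfl, he⟩
        exact he
    rw [this]
    exact MeasurableSet.iUnion (fun h' =>
      (ih h').inter ((hmeas _) (meas_all _)))

lemma meas_comp_traj (X : Fin K × ℕ → Θ → 𝒳) (hmeas : ∀ p, Measurable (X p))
    (π : List (Fin K × 𝒳) → Fin K) (s : ℕ) (g : List (Fin K × 𝒳) → ℝ) :
    Measurable (fun ω => g (traj π (fun i n => X (i, n) ω) s)) := by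
  intro M _
  have : (fun ω => g (traj π (fun i n => X (i, n) ω) s)) ⁻¹' M =
      ⋃ h ∈ {h : List (Fin K × 𝒳) | g h ∈ M},
        {ω | traj π (fun i n => X (i, n) ω) s = h} := by
    ext ω
    simp only [Set.mem_preimage, Set.mem_iUnion, Set.mem_setOf_eq]
    constructor
    · intro hg
      exact ⟨_, hg, rfl⟩
    · rintro ⟨h, hg, he⟩
      rw [he]; exact hg
  rw [this]
  exact MeasurableSet.biUnion (Set.to_countable _)
    (fun h _ => traj_preimage_measurable X hmeas π s h)

lemma integrable_comp_traj (μ : Measure Θ) [IsProbabilityMeasure μ]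
    (X : Fin K × ℕ → Θ → 𝒳) (hmeas : ∀ p, Measurable (X p))
    (π : List (Fin K × 𝒳) → Fin K) (s : ℕ) (g : List (Fin K × 𝒳) → ℝ)
    (hb : ∀ h, ‖g h‖ ≤ 1) :
    Integrable (fun ω => g (traj π (fun i n => X (i, n) ω) s)) μ :=
  (integrable_const 1).mono'
    (meas_comp_traj X hmeas π s g).aestronglyMeasurable
    (Filter.Eventually.of_forall (fun ω => by simpa using hb _))

lemma integral_comp_traj (μ : Measure Θ) [IsProbabilityMeasure μ]
    (X : Fin K × ℕ → Θ → 𝒳) (hmeas : ∀ p, Measurable (X p))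
    (π : List (Fin K × 𝒳) → Fin K) (s : ℕ) (g : List (Fin K × 𝒳) → ℝ)
    (hb : ∀ h, ‖g h‖ ≤ 1) :
    ∫ ω, g (traj π (fun i n => X (i, n) ω) s) ∂μ =
      ∑' h : List (Fin K × 𝒳),
        (μ {ω | traj π (fun i n => X (i, n) ω) s = h}).toReal * g h := by
  letI : MeasurableSpace (List (Fin K × 𝒳)) := ⊤
  haveI : MeasurableSingletonClass (List (Fin K × 𝒳)) := ⟨fun _ => trivial⟩
  set F : Θ → List (Fin K × 𝒳) := fun ω => traj π (fun i n => X (i, n) ω) s with hF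
  have hFm : Measurable F := by
    intro M _
    have : F ⁻¹' M = ⋃ h ∈ M, {ω | F ω = h} := by
      ext ω
      simp only [Set.mem_preimage, Set.mem_iUnion, Set.mem_setOf_eq]
      exact ⟨fun hg => ⟨_, hg, rfl⟩, fun ⟨h, hg, he⟩ => he ▸ hg⟩
    rw [this]
    exact MeasurableSet.biUnion (Set.to_countable _)
      (fun h _ => traj_preimage_measurable X hmeas π s h)
  have hgm : Measurable g := fun _ _ => trivial
  have h1 : ∫ ω, g (F ω) ∂μ = ∫ h, g h ∂(μ.map F) :=
    (integral_map hFm.aemeasurable hgm.stronglyMeasurable.aestronglyMeasurable).symm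
  rw [h1, integral_countable' ?_]
  · refine tsum_congr (fun h => ?_)
    rw [measureReal_def, Measure.map_apply hFm trivial]
    simp only [smul_eq_mul]
    rfl
  · rw [integrable_map_measure hgm.stronglyMeasurable.aestronglyMeasurable hFm.aemeasurable]
    exact integrable_comp_traj μ X hmeas π s g hb

end Meas

section Agree
variable {K : ℕ} {X : Type*}

lemma samp_eq_of_traj_eq (π : List (Fin K × X) → Fin K) (samp samp' : Fin K → ℕ → X)
    (s : ℕ) (heq : traj π samp s = traj π samp' s) (i : Fin K) (m : ℕ)
    (hm : m < pulls (traj π samp' s) i) : samp i m = samp' i m := by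
  have h1 := traj_filter π samp s i
  have h2 := traj_filter π samp' s i
  rw [heq] at h1
  rw [h1] at h2
  rw [List.map_inj_left] at h2
  have := h2 m (List.mem_range.2 hm)
  simpa using this

lemma traj_eq_of_agree (π : List (Fin K × X) → Fin K) (samp samp' : Fin K → ℕ → X)
    (s : ℕ)
    (hag : ∀ i m, m < pulls (traj π samp' s) i → samp i m = samp' i m) :
    traj π samp s = traj π samp' s := by
  suffices h : ∀ k, k ≤ s → traj π samp k = traj π samp' k from h s le_rfl
  intro k hk
  induction k with
  | zero => rfl
  | succ k ih =>
    have hik := ih (by omega)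
    rw [traj_succ, traj_succ, hik]
    congr 1
    have hlt : pulls (traj π samp' k) (π (traj π samp' k)) <
        pulls (traj π samp' s) (π (traj π samp' k)) := by
      have h1 : pulls (traj π samp' k) (π (traj π samp' k)) <
          pulls (traj π samp' (k + 1)) (π (traj π samp' k)) := by
        rw [traj_succ, pulls_append, if_pos rfl]
        omega
      exact lt_of_lt_of_le h1 (pulls_traj_mono π samp' hk _)
    rw [hag _ _ hlt]

end Agree

section Indep

variable {𝒳 : Type*} [Countable 𝒳] [MeasurableSpace 𝒳] [MeasurableSingletonClass 𝒳]
  {Θ : Type*} [MeasurableSpace Θ] {K : ℕ}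

lemma measure_step_indep (μ : Measure Θ) [IsProbabilityMeasure μ]
    (P : Fin K → PMF 𝒳)
    (X : Fin K × ℕ → Θ → 𝒳) (hmeas : ∀ p, Measurable (X p))
    (hindep : iIndepFun X μ)
    (hlaw : ∀ p : Fin K × ℕ, Measure.map (X p) μ = (P p.1).toMeasure)
    (π : List (Fin K × 𝒳) → Fin K) (s : ℕ) (h : List (Fin K × 𝒳)) (B : Set 𝒳) :
    μ ({ω | traj π (fun i n => X (i, n) ω) s = h} ∩
        X (π h, pulls h (π h)) ⁻¹' B) =
      μ {ω | traj π (fun i n => X (i, n) ω) s = h} * (P (π h)).toMeasure B := by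
  rcases Set.eq_empty_or_nonempty {ω | traj π (fun i n => X (i, n) ω) s = h} with hE | hE
  · rw [hE]
    simp
  obtain ⟨ω0, hω0⟩ := hE
  simp only [Set.mem_setOf_eq] at hω0
  set q : Fin K × ℕ := (π h, pulls h (π h)) with hqdef
  set Sh : Finset (Fin K × ℕ) :=
    (Finset.univ ×ˢ Finset.range (h.length + 1)).filter (fun p => p.2 < pulls h p.1) with hShdef
  have hmemSh : ∀ p : Fin K × ℕ, p ∈ Sh ↔ p.2 < pulls h p.1 := by
    intro p
    simp only [hShdef, Finset.mem_filter, Finset.mem_product, Finset.mem_univ, true_and,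
      Finset.mem_range]
    constructor
    · exact fun hp => hp.2
    · intro hp
      exact ⟨lt_of_lt_of_le hp (Nat.le_succ_of_le (pulls_le_length h p.1)), hp⟩
  have hq : q ∉ Sh := by
    rw [hmemSh]
    simp [hqdef]
  have hEh : {ω | traj π (fun i n => X (i, n) ω) s = h} =
      ⋂ p ∈ Sh, X p ⁻¹' {X p ω0} := by
    ext ω
    simp only [Set.mem_setOf_eq, Set.mem_iInter, Set.mem_preimage, Set.mem_singleton_iff]
    constructor
    · intro hT p hp
      have heq : traj π (fun i n => X (i, n) ω) s = traj π (fun i n => X (i, n) ω0) s := by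
        rw [hT, hω0]
      have hm : p.2 < pulls (traj π (fun i n => X (i, n) ω0) s) p.1 := by
        rw [hω0]; exact (hmemSh p).1 hp
      exact samp_eq_of_traj_eq π _ _ s heq p.1 p.2 hm
    · intro hag
      have := traj_eq_of_agree π (fun i n => X (i, n) ω) (fun i n => X (i, n) ω0) s ?_
      · rw [this, hω0]
      · intro i m hm
        rw [hω0] at hm
        exact hag (i, m) ((hmemSh (i, m)).2 hm)
  set sets : Fin K × ℕ → Set 𝒳 := fun p => if p = q then B else {X p ω0} with hsets
  have key := hindep.measure_inter_preimage_eq_mul (insert q Sh)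
    (sets := sets) (fun p _ => meas_all _)
  have key2 := hindep.measure_inter_preimage_eq_mul Sh
    (sets := fun p => {X p ω0}) (fun p _ => meas_all _)
  have hL : ⋂ p ∈ insert q Sh, X p ⁻¹' sets p =
      (X q ⁻¹' B) ∩ ⋂ p ∈ Sh, X p ⁻¹' {X p ω0} := by
    rw [Finset.set_biInter_insert]
    congr 1
    · rw [hsets]; simp
    · exact Set.iInter₂_congr (fun p hp => by
        rw [hsets]
        simp only [if_neg (ne_of_mem_of_not_mem hp hq)])
  have hR : ∏ p ∈ insert q Sh, μ (X p ⁻¹' sets p) =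
      μ (X q ⁻¹' B) * ∏ p ∈ Sh, μ (X p ⁻¹' {X p ω0}) := by
    rw [Finset.prod_insert hq]
    congr 1
    · rw [hsets]; simp
    · exact Finset.prod_congr rfl (fun p hp => by
        rw [hsets]
        simp only [if_neg (ne_of_mem_of_not_mem hp hq)])
  have hXqB : μ (X q ⁻¹' B) = (P (π h)).toMeasure B := by
    rw [← Measure.map_apply (hmeas q) (meas_all B), hlaw q]
  calc μ ({ω | traj π (fun i n => X (i, n) ω) s = h} ∩ X q ⁻¹' B)
      = μ ((X q ⁻¹' B) ∩ ⋂ p ∈ Sh, X p ⁻¹' {X p ω0}) := by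
        rw [hEh, Set.inter_comm]
    _ = μ (⋂ p ∈ insert q Sh, X p ⁻¹' sets p) := by rw [hL]
    _ = μ (X q ⁻¹' B) * ∏ p ∈ Sh, μ (X p ⁻¹' {X p ω0}) := by rw [key, hR]
    _ = μ (X q ⁻¹' B) * μ {ω | traj π (fun i n => X (i, n) ω) s = h} := by
        rw [hEh, key2]
    _ = _ := by rw [hXqB, mul_comm]

end Indep

section MMints

variable {𝒳 : Type*} [Countable 𝒳] [MeasurableSpace 𝒳] [MeasurableSingletonClass 𝒳] {K : ℕ}

lemma mm_toMeasure (P : Fin K → PMF 𝒳) (A : Set 𝒳) (h : List (Fin K × 𝒳)) (i : Fin K) :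
    ((P i).toMeasure (A \ {x | ∃ p ∈ h, p.2 = x})).toReal = missingMass P A h i := by
  rw [PMF.toMeasure_apply (P i) (meas_all _), missingMass,
    tsum_subtype (A \ {x | ∃ p ∈ h, p.2 = x}) (fun x => (P i x).toReal),
    ENNReal.tsum_toReal_eq]
  · congr 1
    funext x
    rw [Set.indicator_apply, Set.indicator_apply]
    split <;> simp
  · intro x
    rw [Set.indicator_apply]
    split
    · exact (lt_of_le_of_lt ((P i).coe_le_one x) ENNReal.one_lt_top).ne
    · simp

lemma seen_finite (h : List (Fin K × 𝒳)) : ({x | ∃ p ∈ h, p.2 = x} : Set 𝒳).Finite := by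
  have : ({x | ∃ p ∈ h, p.2 = x} : Set 𝒳) = Prod.snd '' {p | p ∈ h} := by
    ext x; simp [eq_comm]
  rw [this]
  exact (h.finite_toSet).image _

lemma found_append (A : Set 𝒳) (h : List (Fin K × 𝒳)) (p : Fin K × 𝒳) :
    (found A (h ++ [p]) : ℝ) = found A h +
      (if p.2 ∈ A \ {x | ∃ q ∈ h, q.2 = x} then (1 : ℝ) else 0) := by
  have hfin : (A ∩ {x | ∃ q ∈ h, q.2 = x}).Finite := (seen_finite h).inter_of_right _
  have hseen : {x | ∃ q ∈ h ++ [p], q.2 = x} = {x | ∃ q ∈ h, q.2 = x} ∪ {p.2} := by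
    ext x
    simp only [Set.mem_setOf_eq, List.mem_append, Set.mem_union, Set.mem_singleton_iff]
    constructor
    · rintro ⟨q, hq | hq, rfl⟩
      · exact Or.inl ⟨q, hq, rfl⟩
      · simp at hq; subst hq; exact Or.inr rfl
    · rintro (⟨q, hq, rfl⟩ | rfl)
      · exact ⟨q, Or.inl hq, rfl⟩
      · exact ⟨p, Or.inr (by simp), rfl⟩
  by_cases hp : p.2 ∈ A \ {x | ∃ q ∈ h, q.2 = x}
  · rw [if_pos hp]
    have : A ∩ {x | ∃ q ∈ h ++ [p], q.2 = x} =
        insert p.2 (A ∩ {x | ∃ q ∈ h, q.2 = x}) := by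
      rw [hseen]
      ext x
      simp only [Set.mem_inter_iff, Set.mem_union, Set.mem_singleton_iff, Set.mem_insert_iff]
      constructor
      · rintro ⟨hxA, hx | rfl⟩
        · exact Or.inr ⟨hxA, hx⟩
        · exact Or.inl rfl
      · rintro (rfl | ⟨hxA, hx⟩)
        · exact ⟨hp.1, Or.inr rfl⟩
        · exact ⟨hxA, Or.inl hx⟩
    rw [found, found, this, Set.ncard_insert_of_notMem (fun hc => hp.2 hc.2) hfin]
    push_cast
    ring
  · rw [if_neg hp]
    have : A ∩ {x | ∃ q ∈ h ++ [p], q.2 = x} = A ∩ {x | ∃ q ∈ h, q.2 = x} := by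
      rw [hseen]
      ext x
      simp only [Set.mem_inter_iff, Set.mem_union, Set.mem_singleton_iff]
      constructor
      · rintro ⟨hxA, hx | rfl⟩
        · exact ⟨hxA, hx⟩
        · refine ⟨hxA, ?_⟩
          by_contra hc
          exact hp ⟨hxA, hc⟩
      · rintro ⟨hxA, hx⟩
        exact ⟨hxA, Or.inl hx⟩
    rw [found, found, this]
    ring

lemma found_traj_eq_sum (A : Set 𝒳) (π : List (Fin K × 𝒳) → Fin K)
    (samp : Fin K → ℕ → 𝒳) (t : ℕ) :
    (found A (traj π samp t) : ℝ) = ∑ s ∈ Finset.range t,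
      (if samp (π (traj π samp s)) (pulls (traj π samp s) (π (traj π samp s))) ∈
          A \ {x | ∃ p ∈ traj π samp s, p.2 = x} then (1 : ℝ) else 0) := by
  induction t with
  | zero => simp [traj, found]
  | succ t ih =>
    rw [Finset.sum_range_succ, ← ih, traj_succ, found_append]

end MMints

section Final

variable {𝒳 : Type*} [Countable 𝒳] [MeasurableSpace 𝒳] [MeasurableSingletonClass 𝒳]
  {Θ : Type*} [MeasurableSpace Θ] {K : ℕ}

lemma good_event (μ : Measure Θ) [IsProbabilityMeasure μ] (P : Fin K → PMF 𝒳)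
    (X : Fin K × ℕ → Θ → 𝒳) (hmeas : ∀ p, Measurable (X p))
    (hlaw : ∀ p : Fin K × ℕ, Measure.map (X p) μ = (P p.1).toMeasure) :
    ∀ᵐ ω ∂μ, ∀ p : Fin K × ℕ, X p ω ∈ (P p.1).support := by
  rw [ae_all_iff]
  intro p
  have : μ {ω | X p ω ∉ (P p.1).support} = 0 := by
    have h1 : {ω | X p ω ∉ (P p.1).support} = X p ⁻¹' ((P p.1).support)ᶜ := rfl
    rw [h1, ← Measure.map_apply (hmeas p) (meas_all _), hlaw p]
    rw [PMF.toMeasure_apply_eq_zero_iff _ (meas_all _)]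
    exact disjoint_compl_right
  exact this

lemma sup_mm_eq [Nonempty (Fin K)] (P : Fin K → PMF 𝒳) (A : Set 𝒳)
    (πstar : List (Fin K × 𝒳) → Fin K)
    (hgreedy : ∀ h i, missingMass P A h i ≤ missingMass P A h (πstar h))
    (h : List (Fin K × 𝒳)) :
    (⨆ i, missingMass P A h i) = missingMass P A h (πstar h) :=
  le_antisymm (ciSup_le (hgreedy h)) (le_ciSup ((Set.finite_range _).bddAbove) _)

lemma sup_mm_norm_le [Nonempty (Fin K)] (P : Fin K → PMF 𝒳) (A : Set 𝒳)
    (h : List (Fin K × 𝒳)) : ‖⨆ i, missingMass P A h i‖ ≤ 1 := by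
  rw [Real.norm_eq_abs, abs_le]
  constructor
  · calc (-1 : ℝ) ≤ 0 := by norm_num
      _ ≤ missingMass P A h (Classical.arbitrary (Fin K)) := missingMass_nonneg P A h _
      _ ≤ _ := le_ciSup ((Set.finite_range _).bddAbove) _
  · exact ciSup_le (fun i => missingMass_le_one P A h i)

end Final

/-- Under non-intersecting supports, the greedy oracle's expected discovery count is at
most the sum over steps `s = 1,…,t` of the expected maximal remaining missing mass
`R_{Ī_s, n^π_{Ī_s, s-1}}` along the trajectory of an arbitrary policy `π`. -/
theorem stmt_8 {𝒳 : Type*} [Countable 𝒳] [MeasurableSpace 𝒳] [MeasurableSingletonClass 𝒳]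
    (A : Set 𝒳) (K : ℕ) (hK : 0 < K) (P : Fin K → PMF 𝒳)
    (hdisj : ∀ i j : Fin K, i ≠ j → A ∩ (P i).support ∩ (P j).support = ∅)
    {Θ : Type*} [MeasurableSpace Θ] (μ : Measure Θ) [IsProbabilityMeasure μ]
    (X : Fin K × ℕ → Θ → 𝒳) (hmeas : ∀ p, Measurable (X p))
    (hindep : iIndepFun X μ)
    (hlaw : ∀ p : Fin K × ℕ, Measure.map (X p) μ = (P p.1).toMeasure)
    (π πstar : List (Fin K × 𝒳) → Fin K)
    (hgreedy : ∀ h i, missingMass P A h i ≤ missingMass P A h (πstar h))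
    (t : ℕ) (ht : 1 ≤ t) :
    haveI : Nonempty (Fin K) := Fin.pos_iff_nonempty.mp hK
    ∫ ω, (found A (traj πstar (fun i n => X (i, n) ω) t) : ℝ) ∂μ ≤
      ∑ s ∈ Finset.range t,
        ∫ ω, ⨆ i : Fin K, missingMass P A (traj π (fun i n => X (i, n) ω) s) i ∂μ := by
  haveI : Nonempty (Fin K) := Fin.pos_iff_nonempty.mp hK
  -- the sup function
  set g : List (Fin K × 𝒳) → ℝ := fun h => ⨆ i, missingMass P A h i with hg
  have hgb : ∀ h, ‖g h‖ ≤ 1 := fun h => sup_mm_norm_le P A h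
  -- increments
  set U : ℕ → Set Θ := fun s => {ω |
    X (πstar (traj πstar (fun i n => X (i, n) ω) s),
        pulls (traj πstar (fun i n => X (i, n) ω) s)
          (πstar (traj πstar (fun i n => X (i, n) ω) s))) ω ∈
      A \ {x | ∃ p ∈ traj πstar (fun i n => X (i, n) ω) s, p.2 = x}} with hU
  have hUunion : ∀ s, U s = ⋃ h : List (Fin K × 𝒳),
      ({ω | traj πstar (fun i n => X (i, n) ω) s = h} ∩
        X (πstar h, pulls h (πstar h)) ⁻¹' (A \ {x | ∃ p ∈ h, p.2 = x})) := by
    intro s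
    ext ω
    simp only [hU, Set.mem_setOf_eq, Set.mem_iUnion, Set.mem_inter_iff, Set.mem_preimage]
    constructor
    · intro hω
      exact ⟨traj πstar (fun i n => X (i, n) ω) s, rfl, hω⟩
    · rintro ⟨h, rfl, hω⟩
      exact hω
  have hUmeas : ∀ s, MeasurableSet (U s) := by
    intro s
    rw [hUunion s]
    exact MeasurableSet.iUnion (fun h =>
      (traj_preimage_measurable X hmeas πstar s h).inter ((hmeas _) (meas_all _)))
  -- the LHS decomposes as a sum of integrals of indicators
  have hfound : ∀ ω, (found A (traj πstar (fun i n => X (i, n) ω) t) : ℝ) =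
      ∑ s ∈ Finset.range t, (U s).indicator (1 : Θ → ℝ) ω := by
    intro ω
    rw [found_traj_eq_sum A πstar (fun i n => X (i, n) ω) t]
    refine Finset.sum_congr rfl (fun s _ => ?_)
    rw [Set.indicator_apply]
    simp only [hU, Set.mem_setOf_eq, Pi.one_apply]
  have hincint : ∀ s, Integrable ((U s).indicator (1 : Θ → ℝ)) μ := by
    intro s
    refine (integrable_const (1 : ℝ)).mono'
      ((measurable_one.indicator (hUmeas s)).aestronglyMeasurable)
      (Filter.Eventually.of_forall (fun ω => ?_))
    rw [Set.indicator_apply]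
    split <;> simp
  have hLHS : ∫ ω, (found A (traj πstar (fun i n => X (i, n) ω) t) : ℝ) ∂μ =
      ∑ s ∈ Finset.range t, (μ (U s)).toReal := by
    rw [integral_congr_ae (Filter.Eventually.of_forall hfound),
      integral_finset_sum _ (fun s _ => hincint s)]
    exact Finset.sum_congr rfl (fun s _ => integral_indicator_one (hUmeas s))
  rw [hLHS]
  refine Finset.sum_le_sum (fun s _ => ?_)
  -- compute μ (U s) via independence
  have hdisjU : Pairwise (Function.onFun Disjoint (fun h : List (Fin K × 𝒳) =>
      {ω | traj πstar (fun i n => X (i, n) ω) s = h} ∩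
        X (πstar h, pulls h (πstar h)) ⁻¹' (A \ {x | ∃ p ∈ h, p.2 = x}))) := by
    intro h h' hhh
    refine Set.disjoint_left.2 (fun ω hω hω' => ?_)
    exact hhh (hω.1.symm.trans hω'.1)
  have hμU : (μ (U s)).toReal = ∑' h : List (Fin K × 𝒳),
      (μ {ω | traj πstar (fun i n => X (i, n) ω) s = h}).toReal * g h := by
    rw [hUunion s, measure_iUnion hdisjU (fun h =>
      (traj_preimage_measurable X hmeas πstar s h).inter ((hmeas _) (meas_all _))),
      ENNReal.tsum_toReal_eq (fun h => measure_ne_top μ _)]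
    refine tsum_congr (fun h => ?_)
    rw [measure_step_indep μ P X hmeas hindep hlaw πstar s h, ENNReal.toReal_mul,
      mm_toMeasure P A h (πstar h), hg]
    congr 1
    exact (sup_mm_eq P A πstar hgreedy h).symm
  rw [hμU, ← integral_comp_traj μ X hmeas πstar s g hgb]
  -- compare the two trajectories a.e.
  refine integral_mono_ae (integrable_comp_traj μ X hmeas πstar s g hgb)
    (integrable_comp_traj μ X hmeas π s g hgb) ?_
  filter_upwards [good_event μ P X hmeas hlaw] with ω hω
  have hs : ∀ i n, (fun i n => X (i, n) ω) i n ∈ (P i).support := fun i n => hω (i, n)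
  have e1 : g (traj πstar (fun i n => X (i, n) ω) s) =
      ⨆ i, RR P A (fun i n => X (i, n) ω) i
        (pulls (traj πstar (fun i n => X (i, n) ω) s) i) := by
    rw [hg]
    exact iSup_congr (fun i => missingMass_traj P A hdisj πstar _ hs s i)
  have e2 : (⨆ i, missingMass P A (traj π (fun i n => X (i, n) ω) s) i) =
      ⨆ i, RR P A (fun i n => X (i, n) ω) i
        (pulls (traj π (fun i n => X (i, n) ω) s) i) :=
    iSup_congr (fun i => missingMass_traj P A hdisj π _ hs s i)
  rw [e1, e2]
  exact greedy_sup_le P A hdisj πstar hgreedy _ hs s _ (by rw [sum_pulls, traj_length])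
end
end

section
/- Let $q_1\ge\dots\ge q_K>0$ and define $F(t)=\sum_{i=1}^K (q_i - T^{-1}(t))_+$ for $t>0$, where $T(\lambda)=\sum_{i:q_i>\lambda}\log(q_i/\lambda)$. Then, with $q=\sum_{i=1}^K q_i$, there exists a nondecreasing function $I:(0,\infty)\to\{1,\dots,K\}$ such that for each $t$, $F(t)=q - I(t)\,\underline q_{I(t)}\,\exp(-t/I(t)) - \sum_{i>I(t)} q_i$, where $\underline q_j=(q_1\cdots q_j)^{1/j}$ denotes the geometric mean of the $j$ largest proportions. -/
open Set

/-- With `q₁ ≥ … ≥ q_K > 0`, `T(λ) = ∑_{i : q_i > λ} log(q_i/λ)` and `T⁻¹` its inverse,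
the macroscopic discovery curve `F(t) = ∑ᵢ (q_i - T⁻¹(t))₊` satisfies
`F(t) = q - I(t) q̲_{I(t)} e^{-t/I(t)} - ∑_{i > I(t)} q_i` for some nondecreasing
active-set-size function `I : (0,∞) → {1,…,K}`, where `q = ∑ q_i` and `q̲_j` is the
geometric mean of `q₁,…,q_j`. -/
theorem stmt_19 (K : ℕ) (hK : 0 < K) (q : Fin K → ℝ) (hq : ∀ i, 0 < q i)
    (hsorted : ∀ i j : Fin K, i ≤ j → q j ≤ q i)
    (T Tinv : ℝ → ℝ)
    (hT : ∀ lam : ℝ, T lam =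
      ∑ i ∈ Finset.univ.filter (fun i : Fin K => lam < q i), Real.log (q i / lam))
    (hinv₁ : ∀ lam ∈ Ioo (0 : ℝ) (q ⟨0, hK⟩), Tinv (T lam) = lam)
    (hinv₂ : ∀ t ∈ Ioi (0 : ℝ), Tinv t ∈ Ioo (0 : ℝ) (q ⟨0, hK⟩) ∧ T (Tinv t) = t) :
    ∃ I : ℝ → ℕ, MonotoneOn I (Ioi 0) ∧
      ∀ t : ℝ, 0 < t → 1 ≤ I t ∧ I t ≤ K ∧
        ∑ i, max (q i - Tinv t) 0 =
          (∑ i, q i)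
          - (I t) * Real.exp ((∑ j : Fin K, if (j : ℕ) < I t then Real.log (q j) else 0)
              / (I t)) * Real.exp (-t / I t)
          - ∑ j : Fin K, if I t ≤ (j : ℕ) then q j else 0 := by
  classical
  set I : ℝ → ℕ :=
    fun t => (Finset.univ.filter (fun i : Fin K => Tinv t < q i)).card with hIdef
  -- T is strictly antitone on (0, q 0)
  have hTanti : ∀ a b : ℝ, 0 < a → a < b → b < q ⟨0, hK⟩ → T b < T a := by
    intro a b ha hab hbq
    rw [hT a, hT b]
    calc ∑ i ∈ Finset.univ.filter (fun i : Fin K => b < q i), Real.log (q i / b)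
        < ∑ i ∈ Finset.univ.filter (fun i : Fin K => b < q i), Real.log (q i / a) := by
          apply Finset.sum_lt_sum
          · intro i hi
            have hb : 0 < b := ha.trans hab
            apply Real.log_le_log (div_pos (hq i) hb)
            gcongr
            exact (hq i).le
          · refine ⟨⟨0, hK⟩, Finset.mem_filter.mpr ⟨Finset.mem_univ _, hbq⟩, ?_⟩
            apply Real.log_lt_log (div_pos (hq _) (ha.trans hab))
            exact div_lt_div_of_pos_left (hq _) ha hab
      _ ≤ ∑ i ∈ Finset.univ.filter (fun i : Fin K => a < q i), Real.log (q i / a) := by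
          apply Finset.sum_le_sum_of_subset_of_nonneg
          · intro i hi
            rw [Finset.mem_filter] at hi ⊢
            exact ⟨hi.1, lt_trans hab hi.2⟩
          · intro i hi _
            have : a < q i := (Finset.mem_filter.mp hi).2
            exact Real.log_nonneg ((one_le_div ha).mpr this.le)
  -- Tinv is antitone on (0, ∞)
  have hTinvAnti : ∀ s t : ℝ, 0 < s → s ≤ t → Tinv t ≤ Tinv s := by
    intro s t hs hst
    by_contra h
    push_neg at h
    obtain ⟨⟨hs0, _⟩, hTs⟩ := hinv₂ s hs
    obtain ⟨⟨_, htq⟩, hTt⟩ := hinv₂ t (lt_of_lt_of_le hs hst)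
    have := hTanti (Tinv s) (Tinv t) hs0 h htq
    rw [hTs, hTt] at this
    linarith
  refine ⟨I, ?_, ?_⟩
  · intro s hs t ht hst
    simp only [hIdef]
    apply Finset.card_le_card
    intro i hi
    rw [Finset.mem_filter] at hi ⊢
    exact ⟨hi.1, lt_of_le_of_lt (hTinvAnti s t hs hst) hi.2⟩
  · intro t ht
    obtain ⟨⟨hl0, hlq⟩, hTt⟩ := hinv₂ t ht
    set lam := Tinv t with hlam
    set A := Finset.univ.filter (fun i : Fin K => lam < q i) with hA
    set m := A.card with hm
    have hmI : I t = m := rfl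
    have h1m : 1 ≤ m := by
      rw [hm]
      apply Finset.card_pos.mpr
      exact ⟨⟨0, hK⟩, Finset.mem_filter.mpr ⟨Finset.mem_univ _, hlq⟩⟩
    have hmK : m ≤ K := by
      rw [hm]
      calc A.card ≤ Finset.univ.card := Finset.card_le_card (Finset.subset_univ _)
        _ = K := by simp
    -- membership in A iff index < m
    have hmem : ∀ i : Fin K, i ∈ A ↔ (i : ℕ) < m := by
      intro i
      constructor
      · intro hi
        have hsub : Finset.Iic i ⊆ A := by
          intro j hj
          rw [Finset.mem_Iic] at hj
          rw [hA, Finset.mem_filter]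
          exact ⟨Finset.mem_univ _,
            lt_of_lt_of_le (Finset.mem_filter.mp hi).2 (hsorted j i hj)⟩
        have := Finset.card_le_card hsub
        rw [Fin.card_Iic] at this
        omega
      · intro hi
        by_contra hni
        have hsub : A ⊆ Finset.Iio i := by
          intro j hj
          rw [Finset.mem_Iio]
          by_contra hji
          push_neg at hji
          apply hni
          rw [hA, Finset.mem_filter] at hj ⊢
          exact ⟨Finset.mem_univ _, lt_of_lt_of_le hj.2 (hsorted i j hji)⟩
        have := Finset.card_le_card hsub
        rw [Fin.card_Iio] at this
        omega
    have hmR : (0:ℝ) < (m:ℝ) := by exact_mod_cast h1m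
    -- sums in terms of A
    have hlog : (∑ j : Fin K, if (j : ℕ) < m then Real.log (q j) else 0)
        = ∑ i ∈ A, Real.log (q i) := by
      rw [← Finset.sum_filter]
      apply Finset.sum_congr
      · ext i; simp [hmem i]
      · intros; rfl
    have htail : (∑ j : Fin K, if m ≤ (j : ℕ) then q j else 0)
        = ∑ i, q i - ∑ i ∈ A, q i := by
      have : (∑ j : Fin K, if m ≤ (j : ℕ) then q j else 0)
          = ∑ i ∈ Finset.univ \ A, q i := by
        rw [← Finset.sum_filter]
        apply Finset.sum_congr
        · ext i
          simp only [Finset.mem_filter, Finset.mem_sdiff, Finset.mem_univ, true_and,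
            hmem i]
          omega
        · intros; rfl
      rw [this, Finset.sum_sdiff_eq_sub (Finset.subset_univ _)]
    -- the key equation: t = S - m log lam
    have hS : t = (∑ i ∈ A, Real.log (q i)) - m * Real.log lam := by
      have : T lam = ∑ i ∈ A, (Real.log (q i) - Real.log lam) := by
        rw [hT lam]
        apply Finset.sum_congr rfl
        intro i hi
        exact Real.log_div (ne_of_gt (hq i)) (ne_of_gt hl0)
      rw [← hTt, this, Finset.sum_sub_distrib, Finset.sum_const, nsmul_eq_mul]
    -- the geometric mean times exp(-t/m) equals lam
    have hexp : (m:ℝ) * Real.exp ((∑ i ∈ A, Real.log (q i)) / m) * Real.exp (-t / m)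
        = m * lam := by
      rw [mul_assoc, ← Real.exp_add]
      congr 1
      have : (∑ i ∈ A, Real.log (q i)) / m + -t / m
          = ((∑ i ∈ A, Real.log (q i)) - t) / m := by ring
      rw [this, hS]
      have h2 : (∑ i ∈ A, Real.log (q i)) - ((∑ i ∈ A, Real.log (q i)) - m * Real.log lam)
          = m * Real.log lam := by ring
      rw [h2, mul_comm, mul_div_assoc, div_self (ne_of_gt hmR), mul_one, Real.exp_log hl0]
    -- LHS
    have hLHS : (∑ i, max (q i - lam) 0) = ∑ i ∈ A, q i - m * lam := by
      have : (∑ i, max (q i - lam) 0)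
          = ∑ i : Fin K, if lam < q i then q i - lam else 0 := by
        apply Finset.sum_congr rfl
        intro i _
        by_cases h : lam < q i
        · rw [if_pos h, max_eq_left (by linarith)]
        · push_neg at h
          rw [if_neg (not_lt.mpr h), max_eq_right (by linarith)]
      rw [this, Finset.sum_ite, Finset.sum_const, smul_zero, add_zero, ← hA,
        Finset.sum_sub_distrib, Finset.sum_const, nsmul_eq_mul]
    refine ⟨h1m, hmK, ?_⟩
    rw [hmI, hlog, htail, hLHS]
    rw [hexp]  -- careful: hexp as stated
    ring
end
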